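/- arXiv:1312.6213 — 7 statements merged into one kernel-verified Lean document; each statement's English description precedes it below -/
import Mathlib

section
/- Dependent random choice for second neighborhoods: Let G = (A ∪ B, E) be a C4-free bipartite graph on n vertices with c·n^{3/2} edges and |A| = |B| = n/2, where n > 1/c^{20}. If positive integers a, m, r, t satisfy c^{2t} n − binom(n, r)·(m/(n/2))^t ≥ a, then there exists U ⊆ A with |U| ≥ a such that every r-element subset S ⊆ U has |N_2(S)| ≥ m, where N_2(S) is the set of vertices at distance exactly 2 from every vertex of S. -/
open Finset
open scoped Classical

/-- A graph is `C₄`-free: there is no 4-cycle, equivalently any closed walk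
`a b c d a` of length 4 is degenerate. -/
def C4Free {V : Type*} (G : SimpleGraph V) : Prop :=
  ∀ a b c d : V, G.Adj a b → G.Adj b c → G.Adj c d → G.Adj d a → a = c ∨ b = d

/-- The second common neighborhood of a set `S`: vertices at distance exactly 2
from every vertex of `S`. -/
noncomputable def secondNbhd {V : Type*} [Fintype V] (G : SimpleGraph V) (S : Finset V) :
    Finset V :=
  Finset.univ.filter (fun w => ∀ s ∈ S, G.dist s w = 2)

lemma count_tuples {V : Type*} (A : Finset V) (P : V → Prop) (t : ℕ) :
    (((Fintype.piFinset fun _ : Fin t => A)).filter (fun T => ∀ i, P (T i))).card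
      = (A.filter P).card ^ t := by
  have h : ((Fintype.piFinset fun _ : Fin t => A)).filter (fun T => ∀ i, P (T i))
      = Fintype.piFinset (fun _ : Fin t => A.filter P) := by
    ext T
    simp only [Finset.mem_filter, Fintype.mem_piFinset, forall_and]
  rw [h, Fintype.card_piFinset]
  simp

lemma dist_two_aux' {V : Type*} {G : SimpleGraph V} {x b w : V}
    (h1 : G.Adj b x) (h2 : G.Adj b w) (hne : x ≠ w) (hnadj : ¬ G.Adj x w) :
    G.dist x w = 2 := by
  let p : G.Walk x w := SimpleGraph.Walk.cons h1.symm (SimpleGraph.Walk.cons h2 SimpleGraph.Walk.nil)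
  have hle : G.dist x w ≤ 2 := by simpa [p] using SimpleGraph.dist_le p
  have h0 : G.dist x w ≠ 0 := by
    intro h
    rcases SimpleGraph.dist_eq_zero_iff_eq_or_not_reachable.mp h with h' | h'
    · exact hne h'
    · exact h' ⟨p⟩
  have h1' : G.dist x w ≠ 1 := fun h => hnadj (SimpleGraph.dist_eq_one_iff_adj.mp h)
  omega

lemma deg_sum_eq {V : Type*} [Fintype V] [DecidableEq V] (G : SimpleGraph V)
    [DecidableRel G.Adj] (A B : Finset V) (hdisj : Disjoint A B)
    (hbip : ∀ u w : V, G.Adj u w → (u ∈ A ∧ w ∈ B) ∨ (u ∈ B ∧ w ∈ A)) :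
    ∑ b ∈ B, G.degree b = G.edgeFinset.card := by
  simp_rw [← SimpleGraph.card_neighborFinset_eq_degree]
  rw [← Finset.card_sigma]
  refine Finset.card_bij (fun (p : Σ _ : V, V) _ => s(p.1, p.2)) ?_ ?_ ?_
  · rintro ⟨b, w⟩ hp
    rw [Finset.mem_sigma, SimpleGraph.mem_neighborFinset] at hp
    simpa [SimpleGraph.mem_edgeFinset] using hp.2
  · rintro ⟨b1, w1⟩ h1 ⟨b2, w2⟩ h2 heq
    rw [Finset.mem_sigma, SimpleGraph.mem_neighborFinset] at h1 h2
    simp only [Sym2.eq_iff] at heq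
    rcases heq with ⟨rfl, rfl⟩ | ⟨rfl, rfl⟩
    · rfl
    · exfalso
      rcases hbip _ _ h2.2 with ⟨hb2A, _⟩ | ⟨_, hw2A⟩
      · exact Finset.disjoint_left.mp hdisj hb2A h2.1
      · exact Finset.disjoint_right.mp hdisj h1.1 hw2A
  · intro e he
    rw [SimpleGraph.mem_edgeFinset] at he
    induction e with
    | h u w =>
      rw [SimpleGraph.mem_edgeSet] at he
      rcases hbip _ _ he with ⟨huA, hwB⟩ | ⟨huB, hwA⟩
      · exact ⟨⟨w, u⟩, Finset.mem_sigma.mpr ⟨hwB, (SimpleGraph.mem_neighborFinset G w u).mpr he.symm⟩,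
          Sym2.eq_swap⟩
      · exact ⟨⟨u, w⟩, Finset.mem_sigma.mpr ⟨huB, (SimpleGraph.mem_neighborFinset G u w).mpr he⟩, rfl⟩

lemma key_count {V : Type*} [Fintype V] [DecidableEq V] (G : SimpleGraph V)
    [DecidableRel G.Adj]
    (hG : ∀ a b c d : V, G.Adj a b → G.Adj b c → G.Adj c d → G.Adj d a → a = c ∨ b = d)
    (A B : Finset V) (hdisj : Disjoint A B)
    (hbip : ∀ u w : V, G.Adj u w → (u ∈ A ∧ w ∈ B) ∨ (u ∈ B ∧ w ∈ A)) :
    ∑ b ∈ B, ((G.neighborFinset b).offDiag).card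
      ≤ ∑ u ∈ A, (A.filter fun v => G.dist v u = 2).card := by
  have hBA : ∀ {u v : V}, G.Adj u v → u ∈ B → v ∈ A := by
    intro u v hadj huB
    rcases hbip _ _ hadj with ⟨huA, _⟩ | ⟨_, hvA⟩
    · exact absurd huB (Finset.disjoint_left.mp hdisj huA)
    · exact hvA
  have hnoAA : ∀ {u v : V}, u ∈ A → v ∈ A → ¬ G.Adj u v := by
    intro u v hu hv hadj
    rcases hbip _ _ hadj with ⟨_, hvB⟩ | ⟨huB, _⟩
    · exact Finset.disjoint_left.mp hdisj hv hvB
    · exact Finset.disjoint_left.mp hdisj hu huB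
  rw [← Finset.card_sigma, ← Finset.card_sigma]
  apply Finset.card_le_card_of_injOn (fun p => (⟨p.2.2, p.2.1⟩ : Σ _ : V, V))
  · rintro ⟨b, x, w⟩ hp
    rw [Finset.mem_coe, Finset.mem_sigma, Finset.mem_offDiag] at hp
    obtain ⟨hbB, hx, hw, hxw⟩ := hp
    rw [SimpleGraph.mem_neighborFinset] at hx hw
    have hxA : x ∈ A := hBA hx hbB
    have hwA : w ∈ A := hBA hw hbB
    rw [Finset.mem_coe, Finset.mem_sigma, Finset.mem_filter]
    exact ⟨hwA, hxA, dist_two_aux' hx hw hxw (hnoAA hxA hwA)⟩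
  · rintro ⟨b1, x1, w1⟩ h1 ⟨b2, x2, w2⟩ h2 heq
    simp only [Finset.mem_coe, Finset.mem_sigma, Finset.mem_offDiag,
      SimpleGraph.mem_neighborFinset] at h1 h2
    obtain ⟨rfl, rfl⟩ : w1 = w2 ∧ x1 = x2 := by simpa using heq
    rcases hG x1 b1 w1 b2 h1.2.1.symm h1.2.2.1 h2.2.2.1.symm h2.2.1 with h | h
    · exact absurd h h1.2.2.2
    · subst h; rfl


set_option maxHeartbeats 2000000 in
/-- Dependent random choice for second neighborhoods: in a `C₄`-free bipartite
graph on `n` vertices with parts of size `n/2` and `c·n^{3/2}` edges, where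
`n > 1/c²⁰`, if positive integers `a, m, r, t` satisfy
`c^{2t}·n − binom(n,r)·(m/(n/2))^t ≥ a`, then there is `U ⊆ A` with `|U| ≥ a`
such that every `r`-subset `S ⊆ U` satisfies `|N₂(S)| ≥ m`. -/
theorem dependent_random_choice_second_nbhd {V : Type*} [Fintype V] [DecidableEq V]
    (G : SimpleGraph V) [DecidableRel G.Adj] (hG : C4Free G) (A B : Finset V) (c : ℝ)
    (hc : 0 < c)
    (hdisj : Disjoint A B) (hpart : ∀ v : V, v ∈ A ∨ v ∈ B)
    (hbip : ∀ u w : V, G.Adj u w → (u ∈ A ∧ w ∈ B) ∨ (u ∈ B ∧ w ∈ A))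
    (hA : (A.card : ℝ) = (Fintype.card V : ℝ) / 2)
    (hB : (B.card : ℝ) = (Fintype.card V : ℝ) / 2)
    (he : (G.edgeFinset.card : ℝ) = c * (Fintype.card V : ℝ) ^ ((3 : ℝ) / 2))
    (hn : 1 / c ^ 20 < (Fintype.card V : ℝ))
    (a m r t : ℕ) (ha : 0 < a) (hm : 0 < m) (hr : 0 < r) (ht : 0 < t)
    (hineq : (a : ℝ) ≤ c ^ (2 * t) * (Fintype.card V : ℝ) -
      ((Fintype.card V).choose r : ℝ) * ((m : ℝ) / ((Fintype.card V : ℝ) / 2)) ^ t) :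
    ∃ U ⊆ A, a ≤ U.card ∧
      ∀ S ⊆ U, S.card = r → m ≤ (secondNbhd G S).card := by
  classical
  set n := Fintype.card V with hn_def
  set N : ℝ := (n : ℝ) with hN_def
  have hN0 : (0 : ℝ) < N := lt_trans (by positivity) hn
  set s : ℝ := Real.sqrt N with hs_def
  have hs0 : 0 < s := Real.sqrt_pos.mpr hN0
  have hs2 : s ^ 2 = N := Real.sq_sqrt hN0.le
  -- basic size facts
  have hQ1 : 1 ≤ A.card := by
    rcases Nat.eq_zero_or_pos A.card with h | h
    · rw [h] at hA; norm_num at hA; linarith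
    · exact h
  have hAne : A.Nonempty := Finset.card_pos.mp hQ1
  have hN2 : (2 : ℝ) ≤ N := by
    have : (1 : ℝ) ≤ (A.card : ℝ) := by exact_mod_cast hQ1
    linarith [hA ▸ this]
  -- c * sqrt n > 1
  have hcs : 1 < c * s := by
    have hc20 : 1 < N * c ^ 20 := (div_lt_iff₀ (by positivity)).mp hn
    have hN9 : (1 : ℝ) ≤ N ^ 9 := one_le_pow₀ (by linarith)
    have h20 : (c * s) ^ 20 = (N * c ^ 20) * N ^ 9 := by rw [← hs2]; ring
    refine (one_lt_pow_iff_of_nonneg (n := 20) (by positivity) (by norm_num)).mp ?_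
    rw [h20]; nlinarith
  -- edge count
  have hE : (G.edgeFinset.card : ℝ) = c * N * s := by
    rw [he]
    rw [show (3 : ℝ) / 2 = 1 + 1 / 2 by norm_num, Real.rpow_add hN0, Real.rpow_one,
      ← Real.sqrt_eq_rpow, ← hs_def]
    ring
  have hA' : (A.card : ℝ) = N / 2 := hA
  -- the second-neighborhood counts
  set y : V → ℕ := fun u => (A.filter fun v => G.dist v u = 2).card with hy_def
  have hEd : ∑ b ∈ B, ((G.degree b : ℝ)) = c * N * s := by
    rw [← hE]
    exact_mod_cast deg_sum_eq G A B hdisj hbip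
  have hd2 : 2 * c ^ 2 * N ^ 2 ≤ ∑ b ∈ B, (G.degree b : ℝ) ^ 2 := by
    have h := sq_sum_le_card_mul_sum_sq (s := B) (f := fun b => ((G.degree b : ℝ)))
    rw [hEd, hB] at h
    nlinarith [h, hN0, hs2, sq_nonneg (c * N)]
  have hyd : ∑ b ∈ B, ((G.degree b : ℝ) ^ 2 - G.degree b) ≤ ∑ u ∈ A, (y u : ℝ) := by
    have hk := key_count G hG A B hdisj hbip
    have hcast : ∑ b ∈ B, ((G.degree b : ℝ) ^ 2 - G.degree b)
        = ((∑ b ∈ B, ((G.neighborFinset b).offDiag).card : ℕ) : ℝ) := by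
      rw [Nat.cast_sum]
      refine Finset.sum_congr rfl fun b _ => ?_
      rw [Finset.offDiag_card, SimpleGraph.card_neighborFinset_eq_degree]
      have hdd : G.degree b ≤ G.degree b * G.degree b := by nlinarith [Nat.zero_le (G.degree b)]
      rw [Nat.cast_sub hdd]
      push_cast; ring
    rw [hcast]
    exact_mod_cast hk
  have hysum : c ^ 2 * N ^ 2 / 2 ≤ ∑ u ∈ A, (y u : ℝ) := by
    have hfac : 0 ≤ c * s ^ 3 * ((3 / 2) * (c * s) - 1) := by
      apply mul_nonneg (by positivity)
      linarith
    have e : (3 / 2) * c ^ 2 * N ^ 2 - c * N * s = c * s ^ 3 * ((3 / 2) * (c * s) - 1) := by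
      rw [← hs2]; ring
    refine le_trans ?_ hyd
    rw [Finset.sum_sub_distrib, hEd]
    linarith [hd2, e, hfac]
  obtain ⟨t0, rfl⟩ : ∃ t0, t = t0 + 1 := ⟨t - 1, by omega⟩
  -- Jensen
  have hJ : c ^ (2 * (t0 + 1)) * N * ((A.card : ℝ)) ^ (t0 + 1)
      ≤ ∑ u ∈ A, (y u : ℝ) ^ (t0 + 1) := by
    have hj := pow_sum_div_card_le_sum_pow (s := A) (f := fun u => (y u : ℝ))
      (fun i _ => by positivity) t0
    refine le_trans ?_ hj
    rw [le_div_iff₀ (by positivity)]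
    have hyp : (c ^ 2 * N ^ 2 / 2) ^ (t0 + 1) ≤ (∑ u ∈ A, (y u : ℝ)) ^ (t0 + 1) :=
      pow_le_pow_left₀ (by positivity) hysum _
    refine le_trans ?_ hyp
    rw [hA']
    have e1 : c ^ (2 * (t0 + 1)) * N * (N / 2) ^ (t0 + 1) * (N / 2) ^ t0
        = (c ^ 2 * N ^ 2) ^ (t0 + 1) / 2 ^ (2 * t0 + 1) := by
      field_simp
      rw [show (2:ℝ) ^ (2 * t0 + 1) = 2 ^ t0 * 2 ^ t0 * 2 by ring, div_pow, div_pow, pow_succ (2:ℝ)]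
      have hq : (0:ℝ) < 2 ^ t0 := by positivity
      generalize (2:ℝ) ^ t0 = q at hq ⊢
      field_simp
      ring
    have e2 : (c ^ 2 * N ^ 2 / 2) ^ (t0 + 1) = (c ^ 2 * N ^ 2) ^ (t0 + 1) / 2 ^ (t0 + 1) :=
      div_pow _ _ _
    rw [e1, e2]
    gcongr
    all_goals first
      | omega
      | positivity
      | norm_num
  -- tuples
  set Tset := Fintype.piFinset (fun _ : Fin (t0 + 1) => A) with hT_def
  set X : (Fin (t0 + 1) → V) → Finset V :=
    fun T => A.filter (fun u => ∀ i, G.dist (T i) u = 2) with hX_def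
  have hsum1 : ∑ T ∈ Tset, (X T).card = ∑ u ∈ A, y u ^ (t0 + 1) := by
    have h1 : ∀ T ∈ Tset, (X T).card = ∑ u ∈ A, if (∀ i, G.dist (T i) u = 2) then 1 else 0 :=
      fun T _ => by simp only [hX_def]; exact Finset.card_filter _ _
    rw [Finset.sum_congr rfl h1, Finset.sum_comm]
    refine Finset.sum_congr rfl fun u _ => ?_
    rw [← Finset.card_filter]
    have hfil : Tset.filter (fun T => ∀ i, G.dist (T i) u = 2)
        = Fintype.piFinset (fun _ : Fin (t0 + 1) => A.filter (fun v => G.dist v u = 2)) := by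
      ext T
      simp only [Finset.mem_filter, Fintype.mem_piFinset, hT_def, forall_and]
    rw [hfil, Fintype.card_piFinset]
    simp only [Finset.prod_const, Finset.card_univ, Fintype.card_fin, hy_def]
  set bad := (Finset.powersetCard r A).filter (fun S => (secondNbhd G S).card < m) with hbad_def
  have hsum2 : ∑ T ∈ Tset, (bad.filter (fun S => S ⊆ X T)).card
      ≤ n.choose r * m ^ (t0 + 1) := by
    have h1 : ∀ T ∈ Tset, (bad.filter (fun S => S ⊆ X T)).card
        = ∑ S ∈ bad, if S ⊆ X T then 1 else 0 := fun T _ => Finset.card_filter _ _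
    rw [Finset.sum_congr rfl h1, Finset.sum_comm]
    have hbound : ∀ S ∈ bad, (∑ T ∈ Tset, if S ⊆ X T then 1 else 0) ≤ m ^ (t0 + 1) := by
      intro S hS
      rw [← Finset.card_filter]
      obtain ⟨hSmem, hSm⟩ := Finset.mem_filter.mp hS
      obtain ⟨hSA, hScard⟩ := Finset.mem_powersetCard.mp hSmem
      have hfeq : Tset.filter (fun T => S ⊆ X T)
          = Tset.filter (fun T => ∀ i, ∀ v ∈ S, G.dist (T i) v = 2) := by
        refine Finset.filter_congr fun T hT => ?_
        simp only [hX_def]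
        constructor
        · intro h i v hv
          exact (Finset.mem_filter.mp (h hv)).2 i
        · intro h v hv
          exact Finset.mem_filter.mpr ⟨hSA hv, fun i => h i v hv⟩
      rw [hfeq]
      have hfil : Tset.filter (fun T => ∀ i, ∀ v ∈ S, G.dist (T i) v = 2)
          = Fintype.piFinset (fun _ : Fin (t0 + 1) =>
              A.filter (fun w => ∀ v ∈ S, G.dist w v = 2)) := by
        ext T
        simp only [Finset.mem_filter, Fintype.mem_piFinset, hT_def, forall_and]
      rw [hfil, Fintype.card_piFinset]
      simp only [Finset.prod_const, Finset.card_univ, Fintype.card_fin]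
      refine Nat.pow_le_pow_left ?_ _
      refine le_trans (Finset.card_le_card ?_) (le_of_lt hSm)
      intro w hw
      rw [Finset.mem_filter] at hw
      simp only [secondNbhd, Finset.mem_filter, Finset.mem_univ, true_and]
      intro v hv
      rw [SimpleGraph.dist_comm]
      exact hw.2 v hv
    calc ∑ S ∈ bad, ∑ T ∈ Tset, (if S ⊆ X T then 1 else 0)
        ≤ ∑ S ∈ bad, m ^ (t0 + 1) := Finset.sum_le_sum hbound
      _ = bad.card * m ^ (t0 + 1) := by rw [Finset.sum_const, smul_eq_mul]
      _ ≤ n.choose r * m ^ (t0 + 1) := by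
          apply Nat.mul_le_mul_right
          refine le_trans (Finset.card_filter_le _ _) ?_
          rw [Finset.card_powersetCard]
          exact Nat.choose_le_choose r ((Finset.card_le_univ A).trans_eq Finset.card_univ)
  have hTcard : Tset.card = A.card ^ (t0 + 1) := by
    rw [hT_def, Fintype.card_piFinset]; simp
  have hTne : Tset.Nonempty := by
    rw [hT_def]; exact Fintype.piFinset_nonempty.mpr fun _ => hAne
  have hmain : ∑ _T ∈ Tset, ((a : ℝ)) ≤ ∑ T ∈ Tset,
      (((X T).card : ℝ) - ((bad.filter (fun S => S ⊆ X T)).card : ℝ)) := by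
    rw [Finset.sum_const, Finset.sum_sub_distrib]
    have hX1 : ∑ T ∈ Tset, ((X T).card : ℝ) = ∑ u ∈ A, (y u : ℝ) ^ (t0 + 1) := by
      exact_mod_cast congrArg (Nat.cast (R := ℝ)) hsum1
    have hB1 : ∑ T ∈ Tset, (((bad.filter (fun S => S ⊆ X T)).card : ℝ))
        ≤ (n.choose r : ℝ) * (m : ℝ) ^ (t0 + 1) := by exact_mod_cast hsum2
    have hcard' : (Tset.card : ℝ) = ((A.card : ℝ)) ^ (t0 + 1) := by exact_mod_cast hTcard
    rw [nsmul_eq_mul, hcard', hX1, hA']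
    have hmQ : (m : ℝ) ^ (t0 + 1) = ((m : ℝ) / (N / 2)) ^ (t0 + 1) * (N / 2) ^ (t0 + 1) := by
      rw [← mul_pow, div_mul_cancel₀]
      positivity
    have h2 : ∑ T ∈ Tset, (((bad.filter (fun S => S ⊆ X T)).card : ℝ))
        ≤ (n.choose r : ℝ) * ((m : ℝ) / (N / 2)) ^ (t0 + 1) * (N / 2) ^ (t0 + 1) := by
      rw [mul_assoc, ← hmQ]; exact hB1
    have h3 : (N / 2) ^ (t0 + 1) * (a : ℝ) ≤ (N / 2) ^ (t0 + 1) *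
        (c ^ (2 * (t0 + 1)) * N - (n.choose r : ℝ) * ((m : ℝ) / (N / 2)) ^ (t0 + 1)) :=
      mul_le_mul_of_nonneg_left hineq (by positivity)
    have h1 := hJ
    rw [hA'] at h1
    linarith [h1, h2, h3]
  obtain ⟨T, hTmem, hTa⟩ := Finset.exists_le_of_sum_le hTne hmain
  set bad' := bad.filter (fun S => S ⊆ X T) with hbad'_def
  have hab : a + bad'.card ≤ (X T).card := by
    have h : (a : ℝ) + bad'.card ≤ ((X T).card : ℝ) := by
      rw [hbad'_def]; linarith [hTa]
    exact_mod_cast h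
  let f : Finset V → V := fun S => if h : S.Nonempty then h.choose else hAne.choose
  refine ⟨X T \ bad'.image f, ?_, ?_, ?_⟩
  · refine (Finset.sdiff_subset).trans ?_
    simp only [hX_def]
    exact Finset.filter_subset _ _
  · have h1 : (X T).card ≤ (X T \ bad'.image f).card + (bad'.image f).card :=
      Finset.card_le_card_sdiff_add_card
    have h2 : (bad'.image f).card ≤ bad'.card := Finset.card_image_le
    omega
  · intro S hSU hScard
    by_contra hcon
    push_neg at hcon
    have hSX : S ⊆ X T := hSU.trans Finset.sdiff_subset
    have hSA : S ⊆ A := by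
      refine hSX.trans ?_
      simp only [hX_def]
      exact Finset.filter_subset _ _
    have hSbad : S ∈ bad' := by
      rw [hbad'_def, Finset.mem_filter, hbad_def, Finset.mem_filter, Finset.mem_powersetCard]
      exact ⟨⟨⟨hSA, hScard⟩, hcon⟩, hSX⟩
    have hSne : S.Nonempty := Finset.card_pos.mp (by omega)
    have hfS : f S ∈ S := by simp only [f, dif_pos hSne]; exact hSne.choose_spec
    have hfim : f S ∈ bad'.image f := Finset.mem_image_of_mem f hSbad
    have hmem := hSU hfS
    rw [Finset.mem_sdiff] at hmem
    exact hmem.2 hfim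
end

section
/- Let G be a graph on n vertices with average degree d in which every subgraph has average degree at most d. Then there is a bipartite subgraph G' = G[A, B] with |B| = n/2, e(G') ≥ 0.36·e(G), and every vertex in B has degree (in G') less than 30·d(G'). -/
open Finset
open scoped Classical

lemma bc_ch1 (m k : ℕ) (hk : 1 ≤ k) (hkm : k ≤ m) (hm2k : m ≤ 2*k) :
    2 * m.choose k ≤ 5 * (m-1).choose (k-1) := by
  have hid : m * ((m-1).choose (k-1)) = k * m.choose k := by
    have h := Nat.add_one_mul_choose_eq (m-1) (k-1)
    have h1 : m - 1 + 1 = m := by omega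
    have h2 : k - 1 + 1 = k := by omega
    simp only [Nat.succ_eq_add_one, h1, h2] at h
    exact h.trans (Nat.mul_comm _ _)
  have hmpos : 0 < m := by omega
  have : m * (2 * m.choose k) ≤ m * (5 * (m-1).choose (k-1)) := by
    calc m * (2 * m.choose k) = (2*m) * m.choose k := by ring
    _ ≤ (5*k) * m.choose k := Nat.mul_le_mul_right _ (by omega)
    _ = 5 * (k * m.choose k) := by ring
    _ = 5 * (m * ((m-1).choose (k-1))) := by rw [hid]
    _ = m * (5 * (m-1).choose (k-1)) := by ring
  exact Nat.le_of_mul_le_mul_left this hmpos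

lemma bc_chId (m k : ℕ) (hm : 2 ≤ m) (hk : 1 ≤ k) :
    m * ((m-1) * ((m-2).choose (k-1))) = k * ((m-k) * m.choose k) := by
  obtain ⟨a, rfl⟩ : ∃ a, m = a + 2 := ⟨m - 2, by omega⟩
  obtain ⟨b, rfl⟩ : ∃ b, k = b + 1 := ⟨k - 1, by omega⟩
  simp only [Nat.add_sub_cancel, show a + 2 - 1 = a + 1 from rfl]
  have h1 := Nat.add_one_mul_choose_eq a b
  have h2 := Nat.choose_mul_succ_eq (a+1) (b+1)
  have : a + 1 + 1 - (b + 1) = a + 2 - (b+1) := by omega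
  nlinarith [h1, h2]

lemma bc_ch2 (m k : ℕ) (hk : 1 ≤ k) (h9 : 9*k ≤ 5*m) (hm2k : m ≤ 2*k) (hm : 2 ≤ m) :
    m.choose k ≤ 5 * (m-2).choose (k-1) := by
  have hkm : k ≤ m := by omega
  have hq : m*(m-1) ≤ 5*(k*(m-k)) := by
    zify [show 1 ≤ m by omega, hkm]
    nlinarith [mul_nonneg (by omega : (0:ℤ) ≤ 2*k - m) (by omega : (0:ℤ) ≤ 5*m - 9*k)]
  have hpos : 0 < m * (m-1) := Nat.mul_pos (by omega) (by omega)
  have key : (m*(m-1)) * m.choose k ≤ (m*(m-1)) * (5 * (m-2).choose (k-1)) := by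
    calc (m*(m-1)) * m.choose k ≤ (5*(k*(m-k))) * m.choose k :=
          Nat.mul_le_mul_right _ hq
    _ = 5 * (k * ((m-k) * m.choose k)) := by ring
    _ = 5 * (m * ((m-1) * ((m-2).choose (k-1)))) := by rw [bc_chId m k hm hk]
    _ = (m*(m-1)) * (5 * (m-2).choose (k-1)) := by ring
  exact Nat.le_of_mul_le_mul_left key hpos

/-- Key counting injection: subsets of `Y` of size `k` containing `a` and avoiding `b`
are at least as numerous as `(k-1)`-subsets of `(Y.erase a).erase b`. -/
lemma bc_count {V : Type*} [DecidableEq V] (Y : Finset V) (k : ℕ) (hk : 1 ≤ k)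
    (a b : V) (haY : a ∈ Y) (hba : b ≠ a) :
    (((Y.erase a).erase b).powersetCard (k-1)).card ≤
      ((Y.powersetCard k).filter (fun B => a ∈ B ∧ b ∉ B)).card := by
  apply Finset.card_le_card_of_injOn (insert a)
  · intro S hS
    rw [Finset.mem_coe, Finset.mem_powersetCard] at hS
    obtain ⟨hSsub, hScard⟩ := hS
    have haS : a ∉ S := fun h =>
      (Finset.mem_erase.1 (Finset.erase_subset _ _ (hSsub h))).1 rfl
    rw [Finset.mem_coe, Finset.mem_filter, Finset.mem_powersetCard]
    refine ⟨⟨?_, ?_⟩, Finset.mem_insert_self a S, ?_⟩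
    · intro x hx
      rcases Finset.mem_insert.1 hx with rfl | hx
      · exact haY
      · exact (Finset.mem_erase.1 (Finset.erase_subset _ _ (hSsub hx))).2
    · rw [Finset.card_insert_of_notMem haS, hScard]; omega
    · intro hb
      rcases Finset.mem_insert.1 hb with h | h
      · exact hba h
      · exact (Finset.mem_erase.1 (hSsub h)).1 rfl
  · intro S hS T hT hST
    simp only [Finset.mem_coe, Finset.mem_powersetCard] at hS hT
    have haS : a ∉ S := fun h =>
      (Finset.mem_erase.1 (Finset.erase_subset _ _ (hS.1 h))).1 rfl
    have haT : a ∉ T := fun h =>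
      (Finset.mem_erase.1 (Finset.erase_subset _ _ (hT.1 h))).1 rfl
    rw [← Finset.erase_insert haS, ← Finset.erase_insert haT, hST]

/-- If `G` on an even number `n` of vertices has average degree `d > 0` and
every induced subgraph has average degree at most `d`, then there is a bipartite
subgraph `G' = G[A, B]` with `|B| = n/2`, `e(G') ≥ 0.36·e(G)`, and every vertex
of `B` has degree (in `G'`) less than `30·d(G')`, where `d(G') = 2e(G')/n`. -/
theorem bipartite_cleaning {V : Type*} [Fintype V] [DecidableEq V]
    (G : SimpleGraph V) [DecidableRel G.Adj] (d : ℝ) (hd0 : 0 < d)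
    (hn : Even (Fintype.card V))
    (hd : 2 * (G.edgeFinset.card : ℝ) = d * (Fintype.card V : ℝ))
    (hsub : ∀ S : Finset V, S.Nonempty →
      2 * ((G.edgeFinset.filter (fun e => ∀ x ∈ e, x ∈ S)).card : ℝ) ≤ d * (S.card : ℝ)) :
    ∃ B : Finset V, 2 * B.card = Fintype.card V ∧
      0.36 * (G.edgeFinset.card : ℝ) ≤
        ((G.edgeFinset.filter (fun e => (∃ x ∈ e, x ∈ B) ∧ ∃ y ∈ e, y ∉ B)).card : ℝ) ∧
      ∀ v ∈ B,
        (((G.neighborFinset v).filter (fun x => x ∉ B)).card : ℝ) <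
          30 * (2 * ((G.edgeFinset.filter
            (fun e => (∃ x ∈ e, x ∈ B) ∧ ∃ y ∈ e, y ∉ B)).card : ℝ) /
              (Fintype.card V : ℝ)) := by
  obtain ⟨k, hk2⟩ := hn
  by_cases hk0 : k = 0
  · -- trivial case: no vertices
    subst hk0
    have hE0 : (G.edgeFinset.card : ℝ) = 0 := by
      have : (Fintype.card V : ℝ) = 0 := by rw [hk2]; norm_num
      rw [this, mul_zero] at hd; linarith
    refine ⟨∅, by simp [hk2], ?_, ?_⟩
    · calc 0.36 * (G.edgeFinset.card : ℝ) = 0 := by rw [hE0]; ring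
        _ ≤ _ := Nat.cast_nonneg _
    · intro v hv; simp at hv
  have hk1 : 1 ≤ k := by omega
  set X : Finset V := univ.filter (fun v => 10 * d ≤ (G.degree v : ℝ)) with hX_def
  set Y : Finset V := Xᶜ with hY_def
  set m := Y.card with hm_def
  -- basic cardinality facts
  have hXle : X.card ≤ Fintype.card V := Finset.card_le_univ X
  have hmX : m + X.card = Fintype.card V := by
    rw [hm_def, hY_def, Finset.card_compl]; omega
  -- the total degree identity
  have hdegsum : (∑ v : V, (G.degree v : ℝ)) = 2 * (G.edgeFinset.card : ℝ) := by
    rw [← Nat.cast_sum]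
    exact_mod_cast congrArg (Nat.cast (R := ℝ)) G.sum_degrees_eq_twice_card_edges
  -- |X| ≤ n/10
  have hX10 : 10 * (X.card : ℝ) ≤ (Fintype.card V : ℝ) := by
    have h1 : (X.card : ℝ) * (10 * d) ≤ ∑ v ∈ X, (G.degree v : ℝ) := by
      have := Finset.card_nsmul_le_sum X (fun v => (G.degree v : ℝ)) (10 * d)
        (fun v hv => (Finset.mem_filter.1 hv).2)
      simpa [nsmul_eq_mul] using this
    have h2 : ∑ v ∈ X, (G.degree v : ℝ) ≤ ∑ v : V, (G.degree v : ℝ) :=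
      Finset.sum_le_sum_of_subset_of_nonneg (Finset.subset_univ X)
        (fun _ _ _ => by positivity)
    have h3 : (X.card : ℝ) * (10 * d) ≤ d * (Fintype.card V : ℝ) := by
      rw [← hd]; linarith [hdegsum]
    nlinarith
  have hX10n : 10 * X.card ≤ Fintype.card V := by exact_mod_cast hX10
  have h9 : 9 * k ≤ 5 * m := by omega
  have hkm : k ≤ m := by omega
  have hm2k : m ≤ 2 * k := by omega
  -- edges inside X
  have heX : 2 * ((G.edgeFinset.filter (fun e => ∀ x ∈ e, x ∈ X)).card : ℝ)
      ≤ d * (X.card : ℝ) := by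
    rcases X.eq_empty_or_nonempty with hXe | hXne
    · have he : G.edgeFinset.filter (fun e => ∀ x ∈ e, x ∈ X) = ∅ := by
        rw [Finset.eq_empty_iff_forall_notMem]
        intro e he
        have hx := (Finset.mem_filter.1 he).2 e.out.1 (Sym2.out_fst_mem e)
        simp [hXe] at hx
      rw [he, hXe]; simp
    · exact hsub X hXne
  -- edges touching Y
  have hsplit : (G.edgeFinset.filter (fun e => ∀ x ∈ e, x ∈ X)).card
      + (G.edgeFinset.filter (fun e => ∃ x ∈ e, x ∈ Y)).card = G.edgeFinset.card := by
    have h := Finset.card_filter_add_card_filter_not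
      (s := G.edgeFinset) (p := fun e => ∀ x ∈ e, x ∈ X)
    have heq : G.edgeFinset.filter (fun e => ¬ ∀ x ∈ e, x ∈ X)
        = G.edgeFinset.filter (fun e => ∃ x ∈ e, x ∈ Y) := by
      apply Finset.filter_congr
      intro e _
      rw [hY_def]
      push_neg
      simp [Finset.mem_compl]
    rw [heq] at h
    exact h
  have hE1 : (9:ℝ)/10 * (G.edgeFinset.card : ℝ)
      ≤ ((G.edgeFinset.filter (fun e => ∃ x ∈ e, x ∈ Y)).card : ℝ) := by
    have hc : ((G.edgeFinset.filter (fun e => ∀ x ∈ e, x ∈ X)).card : ℝ)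
        + ((G.edgeFinset.filter (fun e => ∃ x ∈ e, x ∈ Y)).card : ℝ)
        = (G.edgeFinset.card : ℝ) := by exact_mod_cast hsplit
    have hmul : 10 * (d * (X.card:ℝ)) ≤ d * (Fintype.card V : ℝ) := by
      nlinarith
    linarith [hd]
  -- per-edge count lower bound
  have hedge : ∀ e ∈ G.edgeFinset.filter (fun e => ∃ x ∈ e, x ∈ Y),
      2 * m.choose k ≤ 5 * (((Y.powersetCard k).filter
        (fun B => (∃ x ∈ e, x ∈ B) ∧ ∃ y ∈ e, y ∉ B)).card) := by
    have main : ∀ u v : V, u ≠ v → u ∈ Y →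
        2 * m.choose k ≤ 5 * (((Y.powersetCard k).filter
          (fun B => (∃ x ∈ s(u,v), x ∈ B) ∧ ∃ y ∈ s(u,v), y ∉ B)).card) := by
      intro u v huv huY
      by_cases hvY : v ∈ Y
      · -- both endpoints in Y
        have hm2 : 2 ≤ m := by
          have hsub2 : ({u, v} : Finset V) ⊆ Y := by
            intro x hx; rcases Finset.mem_insert.1 hx with rfl | hx
            · exact huY
            · rw [Finset.mem_singleton.1 hx]; exact hvY
          have := Finset.card_le_card hsub2
          rwa [Finset.card_pair huv] at this
        have hc1 : (m-2).choose (k-1) ≤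
            ((Y.powersetCard k).filter (fun B => u ∈ B ∧ v ∉ B)).card := by
          have h := bc_count Y k hk1 u v huY (Ne.symm huv)
          rwa [Finset.card_powersetCard, Finset.card_erase_of_mem
              (Finset.mem_erase.2 ⟨Ne.symm huv, hvY⟩),
            Finset.card_erase_of_mem huY, ← hm_def] at h
        have hc2 : (m-2).choose (k-1) ≤
            ((Y.powersetCard k).filter (fun B => v ∈ B ∧ u ∉ B)).card := by
          have h := bc_count Y k hk1 v u hvY huv
          rwa [Finset.card_powersetCard, Finset.card_erase_of_mem
              (Finset.mem_erase.2 ⟨huv, huY⟩),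
            Finset.card_erase_of_mem hvY, ← hm_def] at h
        have hdisj : Disjoint ((Y.powersetCard k).filter (fun B => u ∈ B ∧ v ∉ B))
            ((Y.powersetCard k).filter (fun B => v ∈ B ∧ u ∉ B)) := by
          rw [Finset.disjoint_left]
          intro B hB1 hB2
          exact (Finset.mem_filter.1 hB2).2.2 (Finset.mem_filter.1 hB1).2.1
        have hun : ((Y.powersetCard k).filter (fun B => u ∈ B ∧ v ∉ B))
            ∪ ((Y.powersetCard k).filter (fun B => v ∈ B ∧ u ∉ B))
            ⊆ (Y.powersetCard k).filter
              (fun B => (∃ x ∈ s(u,v), x ∈ B) ∧ ∃ y ∈ s(u,v), y ∉ B) := by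
          intro B hB
          rcases Finset.mem_union.1 hB with hB | hB
          · obtain ⟨hBF, hu, hv⟩ := Finset.mem_filter.1 hB
            exact Finset.mem_filter.2 ⟨hBF, ⟨u, Sym2.mem_mk_left u v, hu⟩,
              ⟨v, Sym2.mem_mk_right u v, hv⟩⟩
          · obtain ⟨hBF, hv, hu⟩ := Finset.mem_filter.1 hB
            exact Finset.mem_filter.2 ⟨hBF, ⟨v, Sym2.mem_mk_right u v, hv⟩,
              ⟨u, Sym2.mem_mk_left u v, hu⟩⟩
        have hcard : 2 * ((m-2).choose (k-1)) ≤ (((Y.powersetCard k).filter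
            (fun B => (∃ x ∈ s(u,v), x ∈ B) ∧ ∃ y ∈ s(u,v), y ∉ B)).card) := by
          have := Finset.card_le_card hun
          rw [Finset.card_union_of_disjoint hdisj] at this
          omega
        have := bc_ch2 m k hk1 h9 hm2k hm2
        omega
      · -- v outside Y
        have hc1 : (m-1).choose (k-1) ≤
            ((Y.powersetCard k).filter (fun B => u ∈ B ∧ v ∉ B)).card := by
          have h := bc_count Y k hk1 u v huY (Ne.symm huv)
          have hve : (Y.erase u).erase v = Y.erase u :=
            Finset.erase_eq_of_notMem (fun hv => hvY (Finset.mem_of_mem_erase hv))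
          rwa [hve, Finset.card_powersetCard, Finset.card_erase_of_mem huY,
            ← hm_def] at h
        have hsubf : ((Y.powersetCard k).filter (fun B => u ∈ B ∧ v ∉ B))
            ⊆ (Y.powersetCard k).filter
              (fun B => (∃ x ∈ s(u,v), x ∈ B) ∧ ∃ y ∈ s(u,v), y ∉ B) := by
          intro B hB
          obtain ⟨hBF, hu, hv⟩ := Finset.mem_filter.1 hB
          exact Finset.mem_filter.2 ⟨hBF, ⟨u, Sym2.mem_mk_left u v, hu⟩,
            ⟨v, Sym2.mem_mk_right u v, hv⟩⟩
        have hcard := Finset.card_le_card hsubf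
        have := bc_ch1 m k hk1 hkm hm2k
        omega
    intro e
    induction e using Sym2.ind with
    | _ u v =>
      intro he
      obtain ⟨heE, hxY⟩ := Finset.mem_filter.1 he
      have hadj : G.Adj u v := by
        rw [SimpleGraph.mem_edgeFinset, SimpleGraph.mem_edgeSet] at heE
        exact heE
      obtain ⟨x, hxe, hxYm⟩ := hxY
      rcases Sym2.mem_iff.1 hxe with rfl | rfl
      · exact main x v hadj.ne hxYm
      · rw [Sym2.eq_swap]
        exact main x u hadj.ne.symm hxYm
  -- double counting
  have hdc : ∑ B ∈ Y.powersetCard k,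
        (G.edgeFinset.filter (fun e => (∃ x ∈ e, x ∈ B) ∧ ∃ y ∈ e, y ∉ B)).card
      = ∑ e ∈ G.edgeFinset, (((Y.powersetCard k).filter
        (fun B => (∃ x ∈ e, x ∈ B) ∧ ∃ y ∈ e, y ∉ B)).card) := by
    simp only [Finset.card_filter]
    exact Finset.sum_comm
  -- sum lower bound (naturals)
  have hsumnat : 2 * m.choose k
        * (G.edgeFinset.filter (fun e => ∃ x ∈ e, x ∈ Y)).card
      ≤ 5 * ∑ B ∈ Y.powersetCard k,
        (G.edgeFinset.filter (fun e => (∃ x ∈ e, x ∈ B) ∧ ∃ y ∈ e, y ∉ B)).card := by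
    rw [hdc]
    have hconst : 2 * m.choose k
        * (G.edgeFinset.filter (fun e => ∃ x ∈ e, x ∈ Y)).card
        = ∑ _e ∈ G.edgeFinset.filter (fun e => ∃ x ∈ e, x ∈ Y), 2 * m.choose k := by
      rw [Finset.sum_const, smul_eq_mul, mul_comm]
    rw [hconst, Finset.mul_sum]
    calc ∑ _e ∈ G.edgeFinset.filter (fun e => ∃ x ∈ e, x ∈ Y), 2 * m.choose k
        ≤ ∑ e ∈ G.edgeFinset.filter (fun e => ∃ x ∈ e, x ∈ Y),
          5 * (((Y.powersetCard k).filter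
            (fun B => (∃ x ∈ e, x ∈ B) ∧ ∃ y ∈ e, y ∉ B)).card) :=
          Finset.sum_le_sum hedge
      _ ≤ ∑ e ∈ G.edgeFinset, 5 * (((Y.powersetCard k).filter
            (fun B => (∃ x ∈ e, x ∈ B) ∧ ∃ y ∈ e, y ∉ B)).card) :=
          Finset.sum_le_sum_of_subset (Finset.filter_subset _ _)
  -- choose a good B by averaging
  have hNpos : 0 < m.choose k := Nat.choose_pos hkm
  have hFne : (Y.powersetCard k).Nonempty := by
    rw [← Finset.card_pos, Finset.card_powersetCard, ← hm_def]
    exact hNpos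
  have havg : ∑ _B ∈ Y.powersetCard k, (0.36 * (G.edgeFinset.card : ℝ))
      ≤ ∑ B ∈ Y.powersetCard k,
        ((G.edgeFinset.filter (fun e => (∃ x ∈ e, x ∈ B) ∧ ∃ y ∈ e, y ∉ B)).card : ℝ) := by
    rw [Finset.sum_const, nsmul_eq_mul, Finset.card_powersetCard, ← hm_def]
    have hcast : 2 * (m.choose k : ℝ)
          * ((G.edgeFinset.filter (fun e => ∃ x ∈ e, x ∈ Y)).card : ℝ)
        ≤ 5 * ∑ B ∈ Y.powersetCard k,
          ((G.edgeFinset.filter (fun e => (∃ x ∈ e, x ∈ B) ∧ ∃ y ∈ e, y ∉ B)).card : ℝ) := by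
      push_cast
      exact_mod_cast hsumnat
    have hmul : (m.choose k : ℝ) * ((9:ℝ)/10 * (G.edgeFinset.card : ℝ))
        ≤ (m.choose k : ℝ)
          * ((G.edgeFinset.filter (fun e => ∃ x ∈ e, x ∈ Y)).card : ℝ) :=
      mul_le_mul_of_nonneg_left hE1 (Nat.cast_nonneg _)
    nlinarith
  obtain ⟨B, hBF, hBle⟩ := Finset.exists_le_of_sum_le hFne havg
  rw [Finset.mem_powersetCard] at hBF
  obtain ⟨hBY, hBk⟩ := hBF
  refine ⟨B, by omega, hBle, ?_⟩
  intro v hv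
  have hvY : v ∈ Y := hBY hv
  have hvX : v ∉ X := by rw [hY_def] at hvY; exact Finset.mem_compl.1 hvY
  have hvdeg : (G.degree v : ℝ) < 10 * d := by
    by_contra h
    push_neg at h
    exact hvX (Finset.mem_filter.2 ⟨Finset.mem_univ v, h⟩)
  have hdeg2 : (((G.neighborFinset v).filter (fun x => x ∉ B)).card : ℝ)
      ≤ (G.degree v : ℝ) := by
    have := (Finset.card_filter_le (G.neighborFinset v) (fun x => x ∉ B)).trans
      (le_of_eq (G.card_neighborFinset_eq_degree v))
    exact_mod_cast this
  have hn0 : (0:ℝ) < (Fintype.card V : ℝ) := by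
    have : 0 < Fintype.card V := Fintype.card_pos_iff.2 ⟨v⟩
    exact_mod_cast this
  have hfinal : 10 * d ≤ 30 * (2 * ((G.edgeFinset.filter
      (fun e => (∃ x ∈ e, x ∈ B) ∧ ∃ y ∈ e, y ∉ B)).card : ℝ) / (Fintype.card V : ℝ)) := by
    have heq : 30 * (2 * ((G.edgeFinset.filter
        (fun e => (∃ x ∈ e, x ∈ B) ∧ ∃ y ∈ e, y ∉ B)).card : ℝ) / (Fintype.card V : ℝ))
        = 60 * ((G.edgeFinset.filter
          (fun e => (∃ x ∈ e, x ∈ B) ∧ ∃ y ∈ e, y ∉ B)).card : ℝ) / (Fintype.card V : ℝ) := by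
      ring
    rw [heq, le_div_iff₀ hn0]
    have hEnn : (0:ℝ) ≤ (G.edgeFinset.card : ℝ) := Nat.cast_nonneg _
    linarith
  linarith
end

section
/- Let G be a bipartite C4-free graph with minimum degree δ(G) ≥ d/2, and let v be a vertex with a set S1 ⊆ N(v) of size d/2. Then one can choose, for each u ∈ S1, a set of d/4 − 1 neighbors of u outside S1 ∪ {v}, and all these chosen vertices are pairwise distinct across different u ∈ S1; consequently there is a set S2' of exactly (d/2)(d/4 − 1) vertices at distance 2 from v. -/
open Finset
open scoped Classical

/-- In a bipartite `C₄`-free graph with minimum degree at least `d/2`, given a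
vertex `v` and a set `S₁ ⊆ N(v)` of size `d/2`, one may pick for each `u ∈ S₁`
a set of `d/4 − 1` neighbors of `u` avoiding `S₁ ∪ {v}`, pairwise disjoint over
distinct `u`; consequently there is a set `S₂'` of exactly `(d/2)(d/4 − 1)`
vertices at distance 2 from `v`. -/
theorem second_sphere_selection {V : Type*} [Fintype V] [DecidableEq V]
    (G : SimpleGraph V) [DecidableRel G.Adj] (hG : C4Free G)
    (hbip : ∃ A : Set V, ∀ u w : V, G.Adj u w → (u ∈ A ↔ w ∉ A))
    (d : ℕ) (hd8 : 8 ≤ d) (hd4 : 4 ∣ d)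
    (hmin : ∀ x : V, d / 2 ≤ G.degree x)
    (v : V) (S1 : Finset V) (hS1 : S1 ⊆ G.neighborFinset v) (hcard : S1.card = d / 2) :
    ∃ f : V → Finset V,
      (∀ u ∈ S1, f u ⊆ G.neighborFinset u \ insert v S1 ∧ (f u).card = d / 4 - 1) ∧
      (∀ u ∈ S1, ∀ u' ∈ S1, u ≠ u' → Disjoint (f u) (f u')) ∧
      ∃ S2' : Finset V, S2'.card = (d / 2) * (d / 4 - 1) ∧ ∀ w ∈ S2', G.dist v w = 2 := by
  obtain ⟨A, hA⟩ := hbip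
  -- no triangles
  have htri : ∀ x y z : V, G.Adj x y → G.Adj y z → G.Adj z x → False := by
    intro x y z h1 h2 h3
    have := hA x y h1; have := hA y z h2; have := hA z x h3
    tauto
  -- neighbors of u ∈ S1 avoid S1
  have hdisj1 : ∀ u ∈ S1, ∀ w ∈ S1, ¬ G.Adj u w := by
    intro u hu w hw hadj
    have h1 : G.Adj v u := (G.mem_neighborFinset v u).mp (hS1 hu)
    have h2 : G.Adj v w := (G.mem_neighborFinset v w).mp (hS1 hw)
    exact htri v u w h1 hadj h2.symm
  have hbig : ∀ u ∈ S1, d / 4 - 1 ≤ (G.neighborFinset u \ insert v S1).card := by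
    intro u hu
    have hvu : G.Adj v u := (G.mem_neighborFinset v u).mp (hS1 hu)
    have heq : G.neighborFinset u \ insert v S1 = G.neighborFinset u \ {v} := by
      ext w
      simp only [mem_sdiff, mem_insert, mem_singleton]
      constructor
      · rintro ⟨hw, hw2⟩; exact ⟨hw, fun h => hw2 (Or.inl h)⟩
      · rintro ⟨hw, hw2⟩
        refine ⟨hw, ?_⟩
        rintro (rfl | hwS1)
        · exact hw2 rfl
        · exact hdisj1 u hu w hwS1 ((G.mem_neighborFinset u w).mp hw)
    rw [heq]
    have hv : v ∈ G.neighborFinset u := (G.mem_neighborFinset u v).mpr hvu.symm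
    rw [Finset.card_sdiff_of_subset (by simpa using hv), Finset.card_singleton]
    have := hmin u
    rw [← G.card_neighborFinset_eq_degree u] at this
    omega
  have key : ∀ u ∈ S1, ∃ t, t ⊆ G.neighborFinset u \ insert v S1 ∧ t.card = d / 4 - 1 := by
    intro u hu
    obtain ⟨t, ht, htc⟩ := Finset.exists_subset_card_eq (hbig u hu)
    exact ⟨t, ht, htc⟩
  choose! f hf1 hf2 using key
  refine ⟨f, fun u hu => ⟨hf1 u hu, hf2 u hu⟩, ?_, ?_⟩
  · -- pairwise disjointness via C4-freeness
    intro u hu u' hu' hne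
    rw [Finset.disjoint_left]
    intro w hw hw'
    have h1 := hf1 u hu hw
    have h2 := hf1 u' hu' hw'
    rw [mem_sdiff] at h1 h2
    have huw : G.Adj u w := (G.mem_neighborFinset u w).mp h1.1
    have hu'w : G.Adj u' w := (G.mem_neighborFinset u' w).mp h2.1
    have hvu : G.Adj v u := (G.mem_neighborFinset v u).mp (hS1 hu)
    have hvu' : G.Adj v u' := (G.mem_neighborFinset v u').mp (hS1 hu')
    have hwv : w ≠ v := by
      intro h; exact h1.2 (by simp [h])
    rcases hG v u w u' hvu huw hu'w.symm hvu'.symm with h | h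
    · exact hwv h.symm
    · exact hne h
  · -- distinctness gives the full second sphere
    have hdisjf : ∀ u ∈ S1, ∀ u' ∈ S1, u ≠ u' → Disjoint (f u) (f u') := by
      intro u hu u' hu' hne
      rw [Finset.disjoint_left]
      intro w hw hw'
      have h1 := hf1 u hu hw
      have h2 := hf1 u' hu' hw'
      rw [mem_sdiff] at h1 h2
      have huw : G.Adj u w := (G.mem_neighborFinset u w).mp h1.1
      have hu'w : G.Adj u' w := (G.mem_neighborFinset u' w).mp h2.1
      have hvu : G.Adj v u := (G.mem_neighborFinset v u).mp (hS1 hu)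
      have hvu' : G.Adj v u' := (G.mem_neighborFinset v u').mp (hS1 hu')
      have hwv : w ≠ v := by
        intro h; exact h1.2 (by simp [h])
      rcases hG v u w u' hvu huw hu'w.symm hvu'.symm with h | h
      · exact hwv h.symm
      · exact hne h
    refine ⟨S1.biUnion f, ?_, ?_⟩
    · rw [Finset.card_biUnion hdisjf]
      rw [Finset.sum_congr rfl (fun u hu => hf2 u hu), Finset.sum_const, smul_eq_mul, hcard]
    · intro w hw
      rw [Finset.mem_biUnion] at hw
      obtain ⟨u, hu, hwu⟩ := hw
      have h1 := hf1 u hu hwu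
      rw [mem_sdiff] at h1
      have huw : G.Adj u w := (G.mem_neighborFinset u w).mp h1.1
      have hvu : G.Adj v u := (G.mem_neighborFinset v u).mp (hS1 hu)
      have hwv : w ≠ v := by intro h; exact h1.2 (by simp [h])
      have hnadj : ¬ G.Adj v w := fun h => htri v u w hvu huw h.symm
      have p : G.Walk v w := SimpleGraph.Walk.cons hvu (SimpleGraph.Walk.cons huw SimpleGraph.Walk.nil)
      have hle : G.dist v w ≤ 2 :=
        SimpleGraph.dist_le (SimpleGraph.Walk.cons hvu (SimpleGraph.Walk.cons huw SimpleGraph.Walk.nil))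
      have hpos : 0 < G.dist v w :=
        SimpleGraph.Reachable.pos_dist_of_ne ⟨p⟩ (Ne.symm hwv)
      have hne1 : G.dist v w ≠ 1 := fun h =>
        hnadj (SimpleGraph.dist_eq_one_iff_adj.mp h)
      omega
end

section
/- Let G be an (ε1, t)-expander on n vertices and let L ⊆ V(G) be a set of vertices with |L| ≤ (ε1·t)/(16·log²(7.5)) (so that |L| is at most half the minimum guaranteed expansion). Then the graph G' = G − L is an (ε1/8, t')-expander for any t' with t ≤ t' ≤ 4t. -/
open Finset
open scoped Classical

/-- The Komlós–Szemerédi expansion rate function. -/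
noncomputable def epsFun (ε1 t x : ℝ) : ℝ :=
  if x < t / 5 then 0 else ε1 / (Real.log (15 * x / t)) ^ 2

/-- The external neighborhood `Γ(X) = N(X) \ X` of a vertex set `X`. -/
noncomputable def extNbhd {V : Type*} [Fintype V] (G : SimpleGraph V) (X : Finset V) :
    Finset V :=
  Finset.univ.filter (fun v => v ∉ X ∧ ∃ u ∈ X, G.Adj u v)

/-- `G` is an `(ε₁, t)`-expander: every vertex set `X` with
`t/2 ≤ |X| ≤ |V|/2` satisfies `|Γ(X)| ≥ ε(|X|)·|X|`. -/
def IsExpander {V : Type*} [Fintype V] (G : SimpleGraph V) (ε1 t : ℝ) : Prop :=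
  ∀ X : Finset V, t / 2 ≤ (X.card : ℝ) → (X.card : ℝ) ≤ (Fintype.card V : ℝ) / 2 →
    epsFun ε1 t (X.card : ℝ) * (X.card : ℝ) ≤ ((extNbhd G X).card : ℝ)

lemma epsFun_eq {e t y : ℝ} (h : t / 5 ≤ y) :
    epsFun e t y = e / (Real.log (15 * y / t)) ^ 2 := by
  rw [epsFun, if_neg (not_lt.mpr h)]

lemma aux_two_le_log : (2:ℝ) ≤ Real.log 7.5 := by
  rw [Real.le_log_iff_exp_le (by norm_num : (0:ℝ) < 7.5)]
  have h := Real.exp_one_lt_d9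
  have h2 : Real.exp 2 = Real.exp 1 * Real.exp 1 := by
    rw [← Real.exp_add]; norm_num
  nlinarith [Real.exp_pos 1]

lemma aux_sq_add_le {a u : ℝ} (ha : 2 ≤ a) (hu : 0 ≤ u) :
    (a + u) ^ 2 ≤ a ^ 2 * Real.exp u := by
  have h := Real.sum_le_exp_of_nonneg hu 3
  simp [Finset.sum_range_succ] at h
  nlinarith [sq_nonneg u, sq_nonneg (a - 2), sq_nonneg (a*u - 2*u)]

lemma aux_mono {t' x : ℝ} (ht' : 0 < t') (hx : t' / 2 ≤ x) :
    t' / 2 * (Real.log (15 * x / t')) ^ 2 ≤ x * (Real.log 7.5) ^ 2 := by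
  have hxpos : 0 < x := lt_of_lt_of_le (by positivity) hx
  have hs : (1:ℝ) ≤ 2 * x / t' := by rw [le_div_iff₀ ht']; linarith
  have hu : 0 ≤ Real.log (2 * x / t') := Real.log_nonneg hs
  have hrw : 15 * x / t' = 7.5 * (2 * x / t') := by field_simp; ring
  have hlog : Real.log (15 * x / t') = Real.log 7.5 + Real.log (2 * x / t') := by
    rw [hrw, Real.log_mul (by norm_num) (by positivity)]
  have hkey := aux_sq_add_le aux_two_le_log hu
  rw [Real.exp_log (by positivity)] at hkey
  have h2 := mul_le_mul_of_nonneg_left hkey (by positivity : (0:ℝ) ≤ t' / 2)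
  have h3 : t' / 2 * ((Real.log 7.5) ^ 2 * (2 * x / t')) = x * (Real.log 7.5) ^ 2 := by
    field_simp
  rw [hlog]
  linarith

set_option maxHeartbeats 1600000 in
/-- If `G` is an `(ε₁, t)`-expander and `L` is a vertex set with
`|L| ≤ ε₁·t/(16·log²(7.5))`, then `G − L` is an `(ε₁/8, t')`-expander for any
`t ≤ t' ≤ 4t`. -/
theorem expander_minus_small_set {V : Type*} [Fintype V] [DecidableEq V]
    (G : SimpleGraph V) (ε1 t t' : ℝ) (hε : 0 < ε1) (ht : 0 < t)
    (hexp : IsExpander G ε1 t) (L : Finset V)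
    (hL : (L.card : ℝ) ≤ ε1 * t / (16 * (Real.log 7.5) ^ 2))
    (ht1 : t ≤ t') (ht2 : t' ≤ 4 * t) :
    IsExpander (G.induce {v : V | v ∉ L}) (ε1 / 8) t' := by
  intro X hX1 hX2
  have ht' : 0 < t' := lt_of_lt_of_le ht ht1
  set x : ℝ := (X.card : ℝ) with hxdef
  have hxpos : 0 < x := lt_of_lt_of_le (by positivity) hX1
  -- the image of X in V
  set Y : Finset V := X.image Subtype.val with hYdef
  have hYcard : (Y.card : ℝ) = x := by
    rw [hYdef, Finset.card_image_of_injective _ Subtype.val_injective]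
  -- apply expansion of G to Y
  have hcardle : (Fintype.card ({v : V | v ∉ L}) : ℝ) ≤ (Fintype.card V : ℝ) := by
    exact_mod_cast Fintype.card_le_of_injective (fun v : {v : V | v ∉ L} => (v : V))
      Subtype.val_injective
  have hexpY := hexp Y (by rw [hYcard]; linarith) (by rw [hYcard]; linarith)
  -- comparison of external neighborhoods
  have hsub : (extNbhd G Y) \ L ⊆
      (extNbhd (G.induce {v : V | v ∉ L}) X).image Subtype.val := by
    intro v hv
    rw [Finset.mem_sdiff] at hv
    obtain ⟨hv1, hvL⟩ := hv
    simp only [extNbhd, Finset.mem_filter, Finset.mem_univ, true_and] at hv1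
    obtain ⟨hvY, u, huY, hadj⟩ := hv1
    rw [hYdef, Finset.mem_image] at huY
    obtain ⟨u', hu'X, rfl⟩ := huY
    rw [Finset.mem_image]
    refine ⟨⟨v, hvL⟩, ?_, rfl⟩
    simp only [extNbhd, Finset.mem_filter, Finset.mem_univ, true_and]
    refine ⟨fun hmem => hvY ?_, u', hu'X, ?_⟩
    · rw [hYdef]
      exact Finset.mem_image_of_mem _ hmem
    · exact hadj
  have hcard1 : (extNbhd G Y).card ≤ ((extNbhd G Y) \ L).card + L.card :=
    Finset.card_le_card_sdiff_add_card
  have hcard2 : ((extNbhd G Y) \ L).card ≤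
      (extNbhd (G.induce {v : V | v ∉ L}) X).card := by
    calc ((extNbhd G Y) \ L).card
        ≤ ((extNbhd (G.induce {v : V | v ∉ L}) X).image Subtype.val).card :=
          Finset.card_le_card hsub
      _ = (extNbhd (G.induce {v : V | v ∉ L}) X).card :=
          Finset.card_image_of_injective _ Subtype.val_injective
  have hN : ((extNbhd G Y).card : ℝ) - (L.card : ℝ) ≤
      ((extNbhd (G.induce {v : V | v ∉ L}) X).card : ℝ) := by
    have h := hcard1.trans (Nat.add_le_add_right hcard2 L.card)
    have h' : ((extNbhd G Y).card : ℝ) ≤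
        ((extNbhd (G.induce {v : V | v ∉ L}) X).card : ℝ) + (L.card : ℝ) := by
      exact_mod_cast h
    linarith
  -- now the numeric part
  set a : ℝ := Real.log 7.5 with hadef
  have ha : (2:ℝ) ≤ a := aux_two_le_log
  set L2 : ℝ := Real.log (15 * x / t') with hL2def
  set L1 : ℝ := Real.log (15 * x / t) with hL1def
  have hq2 : (7.5:ℝ) ≤ 15 * x / t' := by rw [le_div_iff₀ ht']; linarith
  have hL2a : a ≤ L2 := Real.log_le_log (by norm_num) hq2
  have hL2pos : 0 < L2 := by linarith
  have hL1pos : 0 < L1 := Real.log_pos (by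
    rw [lt_div_iff₀ ht]; nlinarith)
  have hL1le : L1 ≤ 2 * L2 := by
    have hfrac : t' / t ≤ 15 * x / t' := by
      have h1 : t' / t ≤ 4 := by rw [div_le_iff₀ ht]; linarith
      linarith
    have heq : 15 * x / t = (15 * x / t') * (t' / t) := by field_simp
    have hle : 15 * x / t ≤ (15 * x / t') ^ 2 := by
      rw [heq, sq]
      apply mul_le_mul_of_nonneg_left hfrac (by positivity)
    calc L1 ≤ Real.log ((15 * x / t') ^ 2) :=
        Real.log_le_log (by positivity) hle
      _ = 2 * L2 := by rw [Real.log_pow]; push_cast; ring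
  have hmono := aux_mono ht' hX1
  -- |L| ≤ (ε1/8) x / L2²
  have hLsmall : (L.card : ℝ) ≤ ε1 / 8 / L2 ^ 2 * x := by
    have hr : ε1 / 8 / L2 ^ 2 * x = ε1 * x / (8 * L2 ^ 2) := by ring
    rw [hr]
    have h1 : ε1 * t / (16 * a ^ 2) ≤ ε1 * x / (8 * L2 ^ 2) := by
      rw [div_le_div_iff₀ (by positivity) (by positivity)]
      have e1 : ε1 * (t' / 2 * L2 ^ 2) ≤ ε1 * (x * a ^ 2) :=
        mul_le_mul_of_nonneg_left hmono hε.le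
      have e2 : ε1 * t * L2 ^ 2 ≤ ε1 * t' * L2 ^ 2 :=
        mul_le_mul_of_nonneg_right (mul_le_mul_of_nonneg_left ht1 hε.le) (sq_nonneg L2)
      nlinarith [e1, e2]
    linarith
  -- expansion from G
  have hexpY' : ε1 / L1 ^ 2 * x ≤ ((extNbhd G Y).card : ℝ) := by
    rw [hYcard, epsFun_eq (by linarith : t / 5 ≤ x)] at hexpY
    exact hexpY
  have hstep1 : ε1 / (4 * L2 ^ 2) * x ≤ ε1 / L1 ^ 2 * x := by
    apply mul_le_mul_of_nonneg_right _ hxpos.le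
    apply div_le_div_of_nonneg_left hε.le (by positivity)
    nlinarith
  have hgoal : epsFun (ε1 / 8) t' x = ε1 / 8 / L2 ^ 2 :=
    epsFun_eq (by linarith : t' / 5 ≤ x)
  show epsFun (ε1 / 8) t' x * x ≤ _
  rw [hgoal]
  have hring : ε1 / (4 * L2 ^ 2) * x = 2 * (ε1 / 8 / L2 ^ 2 * x) := by ring
  linarith
end

section
/- McDiarmid's bounded differences inequality: Let X = (X_1,…,X_n) be independent random variables with X_k taking values in a set A_k, and let f : ΠA_k → ℝ satisfy |f(x) − f(x')| ≤ σ_k whenever x and x' differ only in the k-th coordinate. Let μ = E[f(X)]. Then for any t ≥ 0, P(|f(X) − μ| ≥ t) ≤ 2·exp(−2t²/Σ_k σ_k²). -/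
open MeasureTheory
open Real

namespace McdAux

lemma D_pos {p : ℝ} (hp0 : 0 ≤ p) (hp1 : p ≤ 1) (h : ℝ) : 0 < 1 - p + p * exp h := by
  rcases eq_or_lt_of_le hp0 with h0 | h0
  · simp [← h0]
  · have := exp_pos h
    nlinarith

lemma hoeffding_core {p : ℝ} (hp0 : 0 ≤ p) (hp1 : p ≤ 1) (h : ℝ) :
    Real.log (1 - p + p * exp h) ≤ p * h + h ^ 2 / 8 := by
  set D : ℝ → ℝ := fun h => 1 - p + p * exp h with hD
  have hDpos : ∀ x, 0 < D x := fun x => D_pos hp0 hp1 x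
  set φ : ℝ → ℝ := fun x => x ^ 2 / 8 + p * x - Real.log (D x) with hφ
  set φ' : ℝ → ℝ := fun x => x / 4 + p - p * exp x / D x with hφ'
  have hDderiv : ∀ x, HasDerivAt D (p * exp x) x := by
    intro x
    exact ((Real.hasDerivAt_exp x).const_mul p).const_add (1 - p)
  have hφderiv : ∀ x, HasDerivAt φ (φ' x) x := by
    intro x
    have h1 : HasDerivAt (fun x : ℝ => x ^ 2 / 8 + p * x) (x / 4 + p) x := by
      have : HasDerivAt (fun x : ℝ => x ^ 2 / 8 + p * x) (2 * x ^ 1 / 8 + p * 1) x := by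
        exact (((hasDerivAt_pow 2 x).div_const 8).add ((hasDerivAt_id x).const_mul p))
      convert this using 1; ring
    have h2 : HasDerivAt (fun x => Real.log (D x)) (p * exp x / D x) x :=
      (hDderiv x).log (hDpos x).ne'
    exact h1.sub h2
  have hφ'deriv : ∀ x, HasDerivAt φ' (1 / 4 - p * exp x * (1 - p) / (D x) ^ 2) x := by
    intro x
    have h1 : HasDerivAt (fun x : ℝ => x / 4 + p) (1 / 4) x := by
      simpa using ((hasDerivAt_id x).div_const 4).add_const p
    have h2 : HasDerivAt (fun x => p * exp x / D x)
        ((p * exp x * D x - p * exp x * (p * exp x)) / (D x) ^ 2) x :=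
      ((Real.hasDerivAt_exp x).const_mul p).div (hDderiv x) (hDpos x).ne'
    have h2' : HasDerivAt (fun x => p * exp x / D x) (p * exp x * (1 - p) / (D x) ^ 2) x := by
      convert h2 using 1
      simp only [hD]
      ring
    exact h1.sub h2'
  have hφ''nonneg : ∀ x, 0 ≤ 1 / 4 - p * exp x * (1 - p) / (D x) ^ 2 := by
    intro x
    have hdx : D x = 1 - p + p * exp x := rfl
    rw [sub_nonneg, div_le_iff₀ (pow_pos (hDpos x) 2)]
    have h1 : 0 ≤ p * exp x := by positivity
    have h2 : 0 ≤ 1 - p := by linarith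
    rw [hdx]
    nlinarith [sq_nonneg (p * exp x - (1 - p))]
  have hφ'mono : Monotone φ' := by
    apply monotone_of_deriv_nonneg
    · exact fun x => (hφ'deriv x).differentiableAt
    · intro x
      rw [(hφ'deriv x).deriv]
      exact hφ''nonneg x
  have hφ'0 : φ' 0 = 0 := by
    simp only [hφ', hD]
    norm_num
  have hφ0 : φ 0 = 0 := by
    simp only [hφ, hD]
    norm_num
  have hmain : 0 ≤ φ h := by
    rcases le_or_gt 0 h with hh | hh
    · have : MonotoneOn φ (Set.Ici (0:ℝ)) := by
        apply monotoneOn_of_deriv_nonneg (convex_Ici 0)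
          (Continuous.continuousOn (by
            have : ∀ x, DifferentiableAt ℝ φ x := fun x => (hφderiv x).differentiableAt
            exact (Differentiable.continuous this)))
          (fun x _ => ((hφderiv x).differentiableAt).differentiableWithinAt)
        intro x hx
        rw [(hφderiv x).deriv]
        have : φ' 0 ≤ φ' x := hφ'mono (le_of_lt (by simpa using hx))
        linarith [hφ'0 ▸ this]
      have := this (Set.self_mem_Ici) (Set.mem_Ici.mpr hh) hh
      linarith [hφ0 ▸ this]
    · have : AntitoneOn φ (Set.Iic (0:ℝ)) := by
        apply antitoneOn_of_deriv_nonpos (convex_Iic 0)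
          (Continuous.continuousOn (by
            have : ∀ x, DifferentiableAt ℝ φ x := fun x => (hφderiv x).differentiableAt
            exact (Differentiable.continuous this)))
          (fun x _ => ((hφderiv x).differentiableAt).differentiableWithinAt)
        intro x hx
        rw [(hφderiv x).deriv]
        have : φ' x ≤ φ' 0 := hφ'mono (le_of_lt (by simpa using hx))
        linarith [hφ'0 ▸ this]
      have := this (Set.mem_Iic.mpr hh.le) (Set.self_mem_Iic) hh.le
      linarith [hφ0 ▸ this]
  have : Real.log (D h) ≤ h ^ 2 / 8 + p * h := by
    simp only [hφ] at hmain; linarith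
  linarith

lemma hoeffding_core_exp {p : ℝ} (hp0 : 0 ≤ p) (hp1 : p ≤ 1) (h : ℝ) :
    (1 - p + p * exp h) * exp (-(p * h)) ≤ exp (h ^ 2 / 8) := by
  have h1 := hoeffding_core hp0 hp1 h
  have h2 : 1 - p + p * exp h ≤ exp (p * h + h ^ 2 / 8) := by
    rw [← Real.exp_log (D_pos hp0 hp1 h)]
    exact exp_le_exp.mpr h1
  calc (1 - p + p * exp h) * exp (-(p * h)) ≤ exp (p * h + h ^ 2 / 8) * exp (-(p * h)) := by
        apply mul_le_mul_of_nonneg_right h2 (exp_nonneg _)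
    _ = exp (h ^ 2 / 8) := by rw [← Real.exp_add]; ring_nf

/-- Hoeffding's lemma, interval form. -/
lemma hoeffding_lemma {α : Type*} [MeasurableSpace α] (ν : Measure α) [IsProbabilityMeasure ν]
    {Y : α → ℝ} (hY : Measurable Y) {a b : ℝ}
    (hab : ∀ x, Y x ∈ Set.Icc a b) (h0 : ∫ x, Y x ∂ν = 0) (s : ℝ) :
    ∫ x, exp (s * Y x) ∂ν ≤ exp (s ^ 2 * (b - a) ^ 2 / 8) := by
  have hne : Nonempty α := by
    by_contra hc
    rw [not_nonempty_iff] at hc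
    have : ν Set.univ = 0 := by simp [Set.univ_eq_empty_iff.mpr hc]
    simp [measure_univ] at this
  obtain ⟨x₀⟩ := hne
  have hab' : a ≤ b := le_trans (hab x₀).1 (hab x₀).2
  have hYint : Integrable Y ν := by
    apply Integrable.mono' (integrable_const (max |a| |b|)) hY.aestronglyMeasurable
    filter_upwards with x
    rw [Real.norm_eq_abs, abs_le]
    constructor
    · calc -(max |a| |b|) ≤ -|a| := by simp
        _ ≤ a := neg_abs_le a
        _ ≤ Y x := (hab x).1
    · exact le_trans (hab x).2 (le_trans (le_abs_self b) (le_max_right _ _))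
  have ha0 : a ≤ 0 := by
    have : ∫ x, Y x ∂ν ≥ ∫ _x, a ∂ν := integral_mono (integrable_const a) hYint (fun x => (hab x).1)
    simpa [h0] using this
  have hb0 : 0 ≤ b := by
    have : ∫ x, Y x ∂ν ≤ ∫ _x, b ∂ν := integral_mono hYint (integrable_const b) (fun x => (hab x).2)
    simpa [h0] using this
  rcases eq_or_lt_of_le hab' with heq | hlt
  · -- a = b, then a = b = 0, Y = 0
    have ha : a = 0 := le_antisymm ha0 (heq ▸ hb0)
    have hYx : ∀ x, Y x = 0 := fun x => le_antisymm (ha ▸ heq ▸ (hab x).2) (ha ▸ (hab x).1)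
    have hb : b = 0 := heq ▸ ha
    simp [hYx, ha, hb]
  · set p : ℝ := -a / (b - a) with hp
    have hba : (0:ℝ) < b - a := by linarith
    have hp0 : 0 ≤ p := by apply div_nonneg <;> linarith
    have hp1 : p ≤ 1 := by rw [div_le_one hba]; linarith
    set h : ℝ := s * (b - a) with hh
    -- pointwise convexity bound
    have hconv : ∀ x, exp (s * Y x) ≤
        (b - Y x) / (b - a) * exp (s * a) + (Y x - a) / (b - a) * exp (s * b) := by
      intro x
      have h1 : (b - Y x) / (b - a) + (Y x - a) / (b - a) = 1 := by
        field_simp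
        ring
      have h2 : (b - Y x) / (b - a) * (s * a) + (Y x - a) / (b - a) * (s * b) = s * Y x := by
        field_simp
        ring
      have := convexOn_exp.2 (Set.mem_univ (s * a)) (Set.mem_univ (s * b))
        (by apply div_nonneg; linarith [(hab x).2]; linarith)
        (by apply div_nonneg; linarith [(hab x).1]; linarith) h1
      simp only [smul_eq_mul] at this
      rw [h2] at this
      exact this
    have hint : Integrable (fun x => exp (s * Y x)) ν := by
      apply Integrable.mono' (integrable_const (exp (|s| * max |a| |b|)))
        ((hY.const_mul s).exp).aestronglyMeasurable
      filter_upwards with x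
      rw [Real.norm_eq_abs, abs_of_pos (exp_pos _), exp_le_exp]
      calc s * Y x ≤ |s * Y x| := le_abs_self _
        _ = |s| * |Y x| := abs_mul _ _
        _ ≤ |s| * max |a| |b| := by
            apply mul_le_mul_of_nonneg_left _ (abs_nonneg s)
            rw [abs_le]
            constructor
            · calc -(max |a| |b|) ≤ -|a| := by simp
                _ ≤ a := neg_abs_le a
                _ ≤ Y x := (hab x).1
            · exact le_trans (hab x).2 (le_trans (le_abs_self b) (le_max_right _ _))
    have hrhs : Integrable (fun x => (b - Y x) / (b - a) * exp (s * a)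
        + (Y x - a) / (b - a) * exp (s * b)) ν := by
      apply Integrable.add
      · exact (((integrable_const b).sub hYint).div_const (b - a)).mul_const _
      · exact ((hYint.sub (integrable_const a)).div_const (b - a)).mul_const _
    have step1 : ∫ x, exp (s * Y x) ∂ν ≤
        ∫ x, ((b - Y x) / (b - a) * exp (s * a) + (Y x - a) / (b - a) * exp (s * b)) ∂ν :=
      integral_mono hint hrhs hconv
    have hint1 : Integrable (fun x => (b - Y x) / (b - a) * exp (s * a)) ν := by
      exact (((integrable_const b).sub hYint).div_const (b - a)).mul_const _
    have hint2 : Integrable (fun x => (Y x - a) / (b - a) * exp (s * b)) ν := by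
      exact ((hYint.sub (integrable_const a)).div_const (b - a)).mul_const _
    have isub1 : ∫ x, b - Y x ∂ν = b := by
      rw [integral_sub (integrable_const b) hYint, h0, integral_const]
      simp
    have isub2 : ∫ x, Y x - a ∂ν = -a := by
      rw [integral_sub hYint (integrable_const a), h0, integral_const]
      simp
    have step2 : ∫ x, ((b - Y x) / (b - a) * exp (s * a) + (Y x - a) / (b - a) * exp (s * b)) ∂ν
        = b / (b - a) * exp (s * a) + (-a) / (b - a) * exp (s * b) := by
      rw [integral_add hint1 hint2, integral_mul_const, integral_mul_const,
        integral_div, integral_div, isub1, isub2]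
    -- identify with core inequality
    have key : b / (b - a) * exp (s * a) + (-a) / (b - a) * exp (s * b)
        = (1 - p + p * exp h) * exp (-(p * h)) := by
      have h1p : 1 - p = b / (b - a) := by rw [hp]; field_simp; ring
      have hph : -(p * h) = s * a := by
        rw [hp, hh]; field_simp
      have hsb : s * b = h + -(p * h) := by
        rw [hph, hh]; ring
      rw [h1p, ← hph, hsb, Real.exp_add]
      ring
    have final : (1 - p + p * exp h) * exp (-(p * h)) ≤ exp (s ^ 2 * (b - a) ^ 2 / 8) := by
      have := hoeffding_core_exp hp0 hp1 h
      convert this using 2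
      rw [hh]; ring
    calc ∫ x, exp (s * Y x) ∂ν ≤ _ := step1
      _ = _ := step2
      _ = _ := key
      _ ≤ _ := final

/-- Hoeffding's lemma, oscillation form. -/
lemma hoeffding_lemma_osc {α : Type*} [MeasurableSpace α] (ν : Measure α) [IsProbabilityMeasure ν]
    {Y : α → ℝ} (hY : Measurable Y) {c : ℝ}
    (hosc : ∀ x x', |Y x - Y x'| ≤ c) (h0 : ∫ x, Y x ∂ν = 0) (s : ℝ) :
    ∫ x, exp (s * Y x) ∂ν ≤ exp (s ^ 2 * c ^ 2 / 8) := by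
  have hne : Nonempty α := by
    by_contra hc
    rw [not_nonempty_iff] at hc
    have : ν Set.univ = 0 := by simp [Set.univ_eq_empty_iff.mpr hc]
    simp [measure_univ] at this
  obtain ⟨x₀⟩ := hne
  have hc0 : 0 ≤ c := le_trans (abs_nonneg _) (hosc x₀ x₀)
  have hbdd : BddAbove (Set.range Y) := by
    refine ⟨Y x₀ + c, ?_⟩
    rintro _ ⟨x, rfl⟩
    have := hosc x x₀
    rw [abs_le] at this
    linarith [this.2]
  set M : ℝ := sSup (Set.range Y) with hM
  have hub : ∀ x, Y x ≤ M := fun x => le_csSup hbdd ⟨x, rfl⟩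
  have hlb : ∀ x, M - c ≤ Y x := by
    intro x
    have : M ≤ Y x + c := by
      have : Nonempty α := ⟨x₀⟩
      apply csSup_le (Set.range_nonempty Y)
      rintro _ ⟨x', rfl⟩
      have := hosc x' x
      rw [abs_le] at this
      linarith [this.1]
    linarith
  have hh := hoeffding_lemma ν hY (a := M - c) (b := M) (fun x => ⟨hlb x, hub x⟩) h0 s
  have heq : s ^ 2 * (M - (M - c)) ^ 2 / 8 = s ^ 2 * c ^ 2 / 8 := by ring
  rwa [heq] at hh

/-- Telescoping: bounded differences imply global oscillation bound. -/
lemma osc_of_bdd_diff {n : ℕ} {A : Fin n → Type*} (f : (∀ k, A k) → ℝ) (σ : Fin n → ℝ)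
    (hbd : ∀ (k : Fin n) (x x' : ∀ j, A j), (∀ j : Fin n, j ≠ k → x j = x' j) →
      |f x - f x'| ≤ σ k)
    (x x' : ∀ k, A k) : |f x - f x'| ≤ ∑ k, σ k := by
  classical
  have key : ∀ T : Finset (Fin n), |f (fun j => if j ∈ T then x j else x' j) - f x'|
      ≤ ∑ k ∈ T, σ k := by
    intro T
    induction T using Finset.induction_on with
    | empty => simp
    | @insert a T ha ih =>
      have step : |f (fun j => if j ∈ insert a T then x j else x' j)
          - f (fun j => if j ∈ T then x j else x' j)| ≤ σ a := by
        apply hbd a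
        intro j hj
        simp [Finset.mem_insert, hj]
      calc |f (fun j => if j ∈ insert a T then x j else x' j) - f x'|
          ≤ |f (fun j => if j ∈ insert a T then x j else x' j)
              - f (fun j => if j ∈ T then x j else x' j)|
            + |f (fun j => if j ∈ T then x j else x' j) - f x'| := abs_sub_le _ _ _
        _ ≤ σ a + ∑ k ∈ T, σ k := add_le_add step ih
        _ = ∑ k ∈ insert a T, σ k := (Finset.sum_insert ha).symm
  have := key Finset.univ
  simpa using this

lemma integrable_of_bdd {β : Type*} [MeasurableSpace β] {P : Measure β} [IsFiniteMeasure P]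
    {h : β → ℝ} (hm : AEStronglyMeasurable h P) {c : ℝ} (hb : ∀ x, |h x| ≤ c) :
    Integrable h P :=
  Integrable.mono' (integrable_const c) hm
    (Filter.Eventually.of_forall fun x => by simpa using hb x)

/-- MGF bound for functions with bounded differences on finite product probability spaces. -/
lemma mgf_pi (n : ℕ) : ∀ {A : Fin n → Type*} [inst : ∀ k, MeasurableSpace (A k)]
    (ν : ∀ k, Measure (A k)) [hP : ∀ k, IsProbabilityMeasure (ν k)]
    (f : (∀ k, A k) → ℝ) (hf : Measurable f) (σ : Fin n → ℝ)
    (hbd : ∀ (k : Fin n) (x x' : ∀ j, A j), (∀ j : Fin n, j ≠ k → x j = x' j) →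
      |f x - f x'| ≤ σ k) (s : ℝ),
    ∫ x, exp (s * (f x - ∫ y, f y ∂(Measure.pi ν))) ∂(Measure.pi ν)
      ≤ exp (s ^ 2 * (∑ k, (σ k) ^ 2) / 8) := by
  induction n with
  | zero =>
    intro A inst ν hP f hf σ hbd s
    have hu : ∀ x y : (∀ k : Fin 0, A k), x = y := fun x y => Subsingleton.elim x y
    have hconst : ∀ x : (∀ k : Fin 0, A k), f x = f (fun k => k.elim0) := fun x => by
      rw [hu x (fun k => k.elim0)]
    rw [integral_congr_ae (Filter.Eventually.of_forall hconst)] at *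
    rw [integral_const]
    simp [integral_congr_ae (Filter.Eventually.of_forall (fun x =>
      show exp (s * (f x - f (fun k => k.elim0))) = 1 by rw [hconst x]; simp))]
  | succ m ih =>
    intro A inst ν hP f hf σ hbd s
    classical
    -- nonemptiness and global bound
    have hne : ∀ k, Nonempty (A k) := by
      intro k
      by_contra hc
      rw [not_nonempty_iff] at hc
      have h0 : (ν k) Set.univ = 0 := by
        rw [Set.univ_eq_empty_iff.mpr hc]; exact measure_empty
      rw [measure_univ] at h0
      exact one_ne_zero h0
    obtain ⟨xbase⟩ : Nonempty (∀ k, A k) := ⟨fun k => Classical.choice (hne k)⟩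
    set C : ℝ := |f xbase| + ∑ k, σ k with hC
    have hfb : ∀ x, |f x| ≤ C := by
      intro x
      have h1 := osc_of_bdd_diff f σ hbd x xbase
      have : |f x| ≤ |f x - f xbase| + |f xbase| := by
        calc |f x| = |(f x - f xbase) + f xbase| := by ring_nf
          _ ≤ |f x - f xbase| + |f xbase| := abs_add_le _ _
      rw [hC]; linarith
    -- decomposition of the product space
    set i0 : Fin (m + 1) := 0 with hi0
    set e := MeasurableEquiv.piFinSuccAbove A i0 with he
    set ν0 := ν i0 with hν0
    set π' := Measure.pi (fun j => ν (i0.succAbove j)) with hπ'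
    haveI : ∀ j, IsProbabilityMeasure (ν (i0.succAbove j)) := fun j => hP _
    have hmp : MeasurePreserving e (Measure.pi ν) (ν0.prod π') :=
      measurePreserving_piFinSuccAbove ν i0
    set mμ := ∫ y, f y ∂(Measure.pi ν) with hm
    set F : A i0 × (∀ j, A (i0.succAbove j)) → ℝ := fun p => f (e.symm p) with hF
    have hFmeas : Measurable F := hf.comp e.symm.measurable
    have hFb : ∀ p, |F p| ≤ C := fun p => hfb _
    have hesymm : ∀ p : A i0 × (∀ j, A (i0.succAbove j)),
        e.symm p = Fin.insertNth i0 p.1 p.2 := fun p => rfl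
    -- coordinates off i0
    have hcoord : ∀ (x₀ : A i0) (y : ∀ j, A (i0.succAbove j)) (j : Fin m),
        (e.symm (x₀, y)) (i0.succAbove j) = y j := by
      intro x₀ y j
      rw [hesymm]
      exact Fin.insertNth_apply_succAbove i0 x₀ y j
    have hcoord0 : ∀ (x₀ : A i0) (y : ∀ j, A (i0.succAbove j)),
        (e.symm (x₀, y)) i0 = x₀ := by
      intro x₀ y
      rw [hesymm]
      exact Fin.insertNth_apply_same i0 x₀ y
    have hrepr : ∀ l : Fin (m + 1), l ≠ i0 → ∃ j : Fin m, l = i0.succAbove j := by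
      intro l hl
      have hl' : l ≠ 0 := hl
      refine ⟨l.pred hl', ?_⟩
      show l = (0 : Fin (m + 1)).succAbove (l.pred hl')
      rw [Fin.zero_succAbove, Fin.succ_pred]
    set g : (∀ j, A (i0.succAbove j)) → ℝ := fun y => ∫ x₀, F (x₀, y) ∂ν0 with hg
    have hgmeas : StronglyMeasurable g := hFmeas.stronglyMeasurable.integral_prod_left'
    have hgb : ∀ y, |g y| ≤ C := by
      intro y
      have h2 := norm_integral_le_of_norm_le_const (μ := ν0) (f := fun x₀ => F (x₀, y)) (C := C)
        (Filter.Eventually.of_forall fun x₀ => by simpa using hFb (x₀, y))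
      simpa [measure_univ] using h2
    have hFyint : ∀ y, Integrable (fun x₀ => F (x₀, y)) ν0 := fun y =>
      integrable_of_bdd ((hFmeas.comp (measurable_id.prodMk measurable_const))).aestronglyMeasurable
        (fun x₀ => hFb (x₀, y))
    -- bounded differences for g
    have hbd' : ∀ (j : Fin m) (y y' : ∀ l, A (i0.succAbove l)),
        (∀ l : Fin m, l ≠ j → y l = y' l) → |g y - g y'| ≤ σ (i0.succAbove j) := by
      intro j y y' hyy'
      have hdiff : g y - g y' = ∫ x₀, (F (x₀, y) - F (x₀, y')) ∂ν0 :=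
        (integral_sub (hFyint y) (hFyint y')).symm
      rw [hdiff]
      have h2 := norm_integral_le_of_norm_le_const (μ := ν0)
        (f := fun x₀ => F (x₀, y) - F (x₀, y')) (C := σ (i0.succAbove j))
        (Filter.Eventually.of_forall (fun x₀ => by
          rw [Real.norm_eq_abs]
          apply hbd (i0.succAbove j)
          intro l hl
          by_cases hl0 : l = i0
          · subst hl0
            rw [hcoord0, hcoord0]
          · obtain ⟨j', rfl⟩ := hrepr l hl0
            have hj' : j' ≠ j := fun hc => hl (by rw [hc])
            rw [hcoord, hcoord, hyy' j' hj']))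
      simpa [measure_univ] using h2
    -- per-slice Hoeffding
    have key1 : ∀ y, ∫ x₀, exp (s * (F (x₀, y) - g y)) ∂ν0 ≤ exp (s ^ 2 * (σ i0) ^ 2 / 8) := by
      intro y
      have hYmeas : Measurable (fun x₀ => F (x₀, y) - g y) :=
        (hFmeas.comp (measurable_id.prodMk measurable_const)).sub measurable_const
      apply hoeffding_lemma_osc ν0 hYmeas
      · intro x₀ x₀'
        have heq : F (x₀, y) - g y - (F (x₀', y) - g y) = F (x₀, y) - F (x₀', y) := by ring
        rw [heq]
        apply hbd i0
        intro l hl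
        obtain ⟨j', rfl⟩ := hrepr l hl
        rw [hcoord, hcoord]
      · rw [integral_sub (hFyint y) (integrable_const _), integral_const]
        simp [hg]
    -- Fubini ingredients
    have hExpInt : Integrable (fun p => exp (s * (F p - mμ))) (ν0.prod π') := by
      apply integrable_of_bdd (((hFmeas.sub measurable_const).const_mul s).exp).aestronglyMeasurable
        (c := exp (|s| * (C + |mμ|)))
      intro p
      rw [abs_of_pos (exp_pos _), exp_le_exp]
      calc s * (F p - mμ) ≤ |s * (F p - mμ)| := le_abs_self _
        _ = |s| * |F p - mμ| := abs_mul _ _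
        _ ≤ |s| * (C + |mμ|) := by
            apply mul_le_mul_of_nonneg_left _ (abs_nonneg s)
            calc |F p - mμ| ≤ |F p| + |mμ| := abs_sub _ _
              _ ≤ C + |mμ| := by linarith [hFb p]
    have main_eq : ∫ x, exp (s * (f x - mμ)) ∂(Measure.pi ν)
        = ∫ p, exp (s * (F p - mμ)) ∂(ν0.prod π') :=
      ((hmp.symm e).integral_comp e.symm.measurableEmbedding
        (fun x => exp (s * (f x - mμ)))).symm
    have fub : ∫ p, exp (s * (F p - mμ)) ∂(ν0.prod π')
        = ∫ y, ∫ x₀, exp (s * (F (x₀, y) - mμ)) ∂ν0 ∂π' :=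
      integral_prod_symm _ hExpInt
    -- mean of g
    have hFint : Integrable F (ν0.prod π') :=
      integrable_of_bdd hFmeas.aestronglyMeasurable hFb
    have hgmean : ∫ y, g y ∂π' = mμ := by
      have h1 : ∫ p, F p ∂(ν0.prod π') = mμ :=
        (hmp.symm e).integral_comp e.symm.measurableEmbedding f
      rw [← h1, integral_prod_symm _ hFint]
    -- inner bound
    have inner_le : ∀ y, ∫ x₀, exp (s * (F (x₀, y) - mμ)) ∂ν0
        ≤ exp (s * (g y - mμ)) * exp (s ^ 2 * (σ i0) ^ 2 / 8) := by
      intro y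
      have split : ∀ x₀, exp (s * (F (x₀, y) - mμ))
          = exp (s * (F (x₀, y) - g y)) * exp (s * (g y - mμ)) := by
        intro x₀
        rw [← Real.exp_add]
        congr 1
        ring
      rw [integral_congr_ae (Filter.Eventually.of_forall split), integral_mul_const]
      calc (∫ x₀, exp (s * (F (x₀, y) - g y)) ∂ν0) * exp (s * (g y - mμ))
          ≤ exp (s ^ 2 * (σ i0) ^ 2 / 8) * exp (s * (g y - mμ)) :=
            mul_le_mul_of_nonneg_right (key1 y) (exp_nonneg _)
        _ = exp (s * (g y - mμ)) * exp (s ^ 2 * (σ i0) ^ 2 / 8) := mul_comm _ _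
    have hgexpint : Integrable (fun y => exp (s * (g y - mμ))) π' := by
      apply integrable_of_bdd
        (((hgmeas.measurable.sub measurable_const).const_mul s).exp).aestronglyMeasurable
        (c := exp (|s| * (C + |mμ|)))
      intro y
      rw [abs_of_pos (exp_pos _), exp_le_exp]
      calc s * (g y - mμ) ≤ |s * (g y - mμ)| := le_abs_self _
        _ = |s| * |g y - mμ| := abs_mul _ _
        _ ≤ |s| * (C + |mμ|) := by
            apply mul_le_mul_of_nonneg_left _ (abs_nonneg s)
            calc |g y - mμ| ≤ |g y| + |mμ| := abs_sub _ _
              _ ≤ C + |mμ| := by linarith [hgb y]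
    have outer : ∫ y, ∫ x₀, exp (s * (F (x₀, y) - mμ)) ∂ν0 ∂π'
        ≤ ∫ y, exp (s * (g y - mμ)) * exp (s ^ 2 * (σ i0) ^ 2 / 8) ∂π' := by
      apply integral_mono_of_nonneg
      · exact Filter.Eventually.of_forall fun y => integral_nonneg fun x₀ => (exp_pos _).le
      · exact hgexpint.mul_const _
      · exact Filter.Eventually.of_forall inner_le
    -- apply induction hypothesis to g
    have ihg : ∫ y, exp (s * (g y - ∫ y', g y' ∂π')) ∂π'
        ≤ exp (s ^ 2 * (∑ j, (σ (i0.succAbove j)) ^ 2) / 8) :=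
      ih (fun j => ν (i0.succAbove j)) g hgmeas.measurable
        (fun j => σ (i0.succAbove j)) hbd' s
    rw [hgmean] at ihg
    have last : ∫ y, exp (s * (g y - mμ)) * exp (s ^ 2 * (σ i0) ^ 2 / 8) ∂π'
        ≤ exp (s ^ 2 * (∑ j, (σ (i0.succAbove j)) ^ 2) / 8) * exp (s ^ 2 * (σ i0) ^ 2 / 8) := by
      rw [integral_mul_const]
      exact mul_le_mul_of_nonneg_right ihg (exp_nonneg _)
    have sum_split : ∑ k, (σ k) ^ 2 = (σ i0) ^ 2 + ∑ j, (σ (i0.succAbove j)) ^ 2 := by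
      simp [hi0, Fin.sum_univ_succ, Fin.zero_succAbove]
    calc ∫ x, exp (s * (f x - mμ)) ∂(Measure.pi ν)
        = ∫ y, ∫ x₀, exp (s * (F (x₀, y) - mμ)) ∂ν0 ∂π' := by rw [main_eq, fub]
      _ ≤ ∫ y, exp (s * (g y - mμ)) * exp (s ^ 2 * (σ i0) ^ 2 / 8) ∂π' := outer
      _ ≤ exp (s ^ 2 * (∑ j, (σ (i0.succAbove j)) ^ 2) / 8) * exp (s ^ 2 * (σ i0) ^ 2 / 8) := last
      _ = exp (s ^ 2 * (∑ k, (σ k) ^ 2) / 8) := by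
          rw [← Real.exp_add, sum_split]
          congr 1
          ring

/-- The joint law of independent random variables is the product of the marginals. -/
lemma map_eq_pi {Ω : Type*} [MeasurableSpace Ω] (μ : Measure Ω) [IsProbabilityMeasure μ]
    {n : ℕ} {A : Fin n → Type*} [mA : ∀ k, MeasurableSpace (A k)]
    (X : ∀ k, Ω → A k) (hXmeas : ∀ k, Measurable (X k))
    (hindep : ProbabilityTheory.iIndepFun X μ) :
    Measure.map (fun ω k => X k ω) μ = Measure.pi (fun k => Measure.map (X k) μ) := by
  haveI : ∀ k, IsProbabilityMeasure (Measure.map (X k) μ) :=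
    fun k => Measure.isProbabilityMeasure_map (hXmeas k).aemeasurable
  refine (Measure.pi_eq ?_).symm
  intro s hs
  rw [Measure.map_apply (measurable_pi_lambda _ fun k => hXmeas k) (MeasurableSet.univ_pi hs)]
  have hpre : (fun ω k => X k ω) ⁻¹' Set.pi Set.univ s = ⋂ k, X k ⁻¹' s k := by
    ext ω
    simp [Set.mem_pi]
  rw [hpre, hindep.meas_iInter (fun k => ⟨s k, hs k, rfl⟩)]
  exact Finset.prod_congr rfl fun k _ =>
    (Measure.map_apply (hXmeas k) (hs k)).symm

end McdAux

open McdAux in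
/-- McDiarmid's independent bounded differences inequality: if `X₁, …, Xₙ` are
independent random variables with `Xₖ` valued in `A k`, and `f` satisfies
`|f(x) − f(x')| ≤ σ k` whenever `x, x'` differ only in the `k`-th coordinate,
then for `t ≥ 0`,
`P(|f(X) − E[f(X)]| ≥ t) ≤ 2·exp(−2t²/Σₖ σₖ²)`. -/
theorem mcdiarmid_bounded_differences {Ω : Type*} [MeasurableSpace Ω]
    (μ : Measure Ω) [IsProbabilityMeasure μ]
    {n : ℕ} {A : Fin n → Type*} [mA : ∀ k, MeasurableSpace (A k)]
    (X : ∀ k, Ω → A k) (hXmeas : ∀ k, Measurable (X k))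
    (hindep : ProbabilityTheory.iIndepFun X μ)
    (f : (∀ k, A k) → ℝ) (hf : Measurable f)
    (σ : Fin n → ℝ)
    (hbd : ∀ (k : Fin n) (x x' : ∀ j, A j), (∀ j : Fin n, j ≠ k → x j = x' j) →
      |f x - f x'| ≤ σ k)
    (t : ℝ) (ht : 0 ≤ t) :
    μ {ω | t ≤ |f (fun k => X k ω) - ∫ ω', f (fun k => X k ω') ∂μ|} ≤
      ENNReal.ofReal (2 * Real.exp (-2 * t ^ 2 / ∑ k, (σ k) ^ 2)) := by
  classical
  set S := ∑ k, (σ k) ^ 2 with hS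
  have hSnonneg : 0 ≤ S := Finset.sum_nonneg fun k _ => sq_nonneg _
  rcases eq_or_lt_of_le hSnonneg with hS0 | hSpos
  · -- degenerate case S = 0
    rw [← hS0]
    simp only [div_zero, Real.exp_zero, mul_one]
    calc μ _ ≤ 1 := prob_le_one
      _ ≤ ENNReal.ofReal 2 := ENNReal.one_le_ofReal.mpr (by norm_num)
  · -- main case
    set m := ∫ ω', f (fun k => X k ω') ∂μ with hm
    set Z : Ω → ℝ := fun ω => f (fun k => X k ω) - m with hZ
    set T : Ω → (∀ k, A k) := fun ω k => X k ω with hT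
    have hTmeas : Measurable T := measurable_pi_lambda _ hXmeas
    set ν : ∀ k, Measure (A k) := fun k => Measure.map (X k) μ with hν
    haveI : ∀ k, IsProbabilityMeasure (ν k) :=
      fun k => Measure.isProbabilityMeasure_map (hXmeas k).aemeasurable
    have hmap : Measure.map T μ = Measure.pi ν := map_eq_pi μ X hXmeas hindep
    -- boundedness of f
    have hΩne : Nonempty Ω := by
      by_contra hc
      rw [not_nonempty_iff] at hc
      have h0 : μ Set.univ = 0 := by
        rw [Set.univ_eq_empty_iff.mpr hc]; exact measure_empty
      rw [measure_univ] at h0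
      exact one_ne_zero h0
    obtain ⟨ω₀⟩ := hΩne
    set C : ℝ := |f (T ω₀)| + ∑ k, σ k with hC
    have hfb : ∀ x, |f x| ≤ C := by
      intro x
      have h1 := osc_of_bdd_diff f σ hbd x (T ω₀)
      have h2 : |f x| ≤ |f x - f (T ω₀)| + |f (T ω₀)| := by
        calc |f x| = |(f x - f (T ω₀)) + f (T ω₀)| := by ring_nf
          _ ≤ |f x - f (T ω₀)| + |f (T ω₀)| := abs_add_le _ _
      rw [hC]; linarith
    -- identification of the mean
    have hm_pi : ∫ x, f x ∂(Measure.pi ν) = m := by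
      rw [← hmap, integral_map hTmeas.aemeasurable hf.aestronglyMeasurable]
    set s : ℝ := 4 * t / S with hs_def
    have hs : 0 ≤ s := by positivity
    -- integrability
    have hexp_bound : ∀ (W : Ω → ℝ), (∀ ω, |W ω| ≤ C + |m|) →
        ∀ ω, |exp (s * W ω)| ≤ exp (|s| * (C + |m|)) := by
      intro W hW ω
      rw [abs_of_pos (exp_pos _), Real.exp_le_exp]
      calc s * W ω ≤ |s * W ω| := le_abs_self _
        _ = |s| * |W ω| := abs_mul _ _
        _ ≤ |s| * (C + |m|) := mul_le_mul_of_nonneg_left (hW ω) (abs_nonneg s)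
    have hZbd : ∀ ω, |Z ω| ≤ C + |m| := by
      intro ω
      calc |Z ω| ≤ |f (fun k => X k ω)| + |m| := abs_sub _ _
        _ ≤ C + |m| := by linarith [hfb (fun k => X k ω)]
    have hZmeas : Measurable Z := (hf.comp hTmeas).sub measurable_const
    have hint1 : Integrable (fun ω => exp (s * Z ω)) μ :=
      integrable_of_bdd ((hZmeas.const_mul s).exp).aestronglyMeasurable
        (hexp_bound Z hZbd)
    have hint2 : Integrable (fun ω => exp (s * (-Z ω))) μ :=
      integrable_of_bdd ((hZmeas.neg.const_mul s).exp).aestronglyMeasurable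
        (hexp_bound (fun ω => -Z ω) (fun ω => by simpa using hZbd ω))
    -- mgf bounds via the product-measure lemma
    have hmgf1 : ∫ ω, exp (s * Z ω) ∂μ ≤ exp (s ^ 2 * S / 8) := by
      have h1 : ∫ ω, exp (s * Z ω) ∂μ = ∫ x, exp (s * (f x - m)) ∂(Measure.pi ν) := by
        rw [← hmap, integral_map hTmeas.aemeasurable (f := fun x => exp (s * (f x - m)))
          (((hf.sub measurable_const).const_mul s).exp).aestronglyMeasurable]
      rw [h1, ← hm_pi]
      exact mgf_pi n ν f hf σ hbd s
    have hmgf2 : ∫ ω, exp (s * (-Z ω)) ∂μ ≤ exp (s ^ 2 * S / 8) := by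
      set f' : (∀ k, A k) → ℝ := fun x => -f x with hf'
      have hf'meas : Measurable f' := hf.neg
      have hbd' : ∀ (k : Fin n) (x x' : ∀ j, A j), (∀ j : Fin n, j ≠ k → x j = x' j) →
          |f' x - f' x'| ≤ σ k := by
        intro k x x' hxx'
        have : |f' x - f' x'| = |f x - f x'| := by
          rw [hf']
          simp only
          rw [abs_sub_comm]
          congr 1
          ring
        rw [this]
        exact hbd k x x' hxx'
      have hm' : ∫ x, f' x ∂(Measure.pi ν) = -m := by
        rw [hf']
        simp only
        rw [integral_neg, hm_pi]
      have h1 : ∫ ω, exp (s * (-Z ω)) ∂μ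
          = ∫ x, exp (s * (f' x - ∫ y, f' y ∂(Measure.pi ν))) ∂(Measure.pi ν) := by
        rw [hm', ← hmap, integral_map hTmeas.aemeasurable (f := fun x => exp (s * (f' x - -m)))
          (((hf'meas.sub measurable_const).const_mul s).exp).aestronglyMeasurable]
        congr 1
        funext ω
        congr 1
        rw [hZ, hf']
        simp only
        ring
      rw [h1]
      exact mgf_pi n ν f' hf'meas σ hbd' s
    -- Chernoff bounds
    have hexp_eq : -s * t + s ^ 2 * S / 8 = -2 * t ^ 2 / S := by
      rw [hs_def]
      field_simp
      ring
    have chern : ∀ (W : Ω → ℝ), Integrable (fun ω => exp (s * W ω)) μ →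
        (∫ ω, exp (s * W ω) ∂μ ≤ exp (s ^ 2 * S / 8)) →
        μ {ω | t ≤ W ω} ≤ ENNReal.ofReal (exp (-2 * t ^ 2 / S)) := by
      intro W hint hmgf
      have h1 := ProbabilityTheory.measure_ge_le_exp_mul_mgf (X := W) (μ := μ) t hs hint
      have h2 : ProbabilityTheory.mgf W μ s = ∫ ω, exp (s * W ω) ∂μ := rfl
      rw [h2] at h1
      have h3 : (μ {ω | t ≤ W ω}).toReal ≤ exp (-2 * t ^ 2 / S) := by
        calc (μ {ω | t ≤ W ω}).toReal ≤ exp (-s * t) * ∫ ω, exp (s * W ω) ∂μ := h1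
          _ ≤ exp (-s * t) * exp (s ^ 2 * S / 8) :=
              mul_le_mul_of_nonneg_left hmgf (exp_nonneg _)
          _ = exp (-s * t + s ^ 2 * S / 8) := (Real.exp_add _ _).symm
          _ = exp (-2 * t ^ 2 / S) := by rw [hexp_eq]
      calc μ {ω | t ≤ W ω} = ENNReal.ofReal ((μ {ω | t ≤ W ω}).toReal) :=
            (ENNReal.ofReal_toReal (measure_ne_top μ _)).symm
        _ ≤ ENNReal.ofReal (exp (-2 * t ^ 2 / S)) := ENNReal.ofReal_le_ofReal h3
    have hsub : {ω | t ≤ |Z ω|} ⊆ {ω | t ≤ Z ω} ∪ {ω | t ≤ -Z ω} := by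
      intro ω hω
      have hω' : t ≤ |Z ω| := hω
      rcases le_abs.mp hω' with h | h
      · exact Or.inl h
      · exact Or.inr h
    calc μ {ω | t ≤ |Z ω|} ≤ μ ({ω | t ≤ Z ω} ∪ {ω | t ≤ -Z ω}) := measure_mono hsub
      _ ≤ μ {ω | t ≤ Z ω} + μ {ω | t ≤ -Z ω} := measure_union_le _ _
      _ ≤ ENNReal.ofReal (exp (-2 * t ^ 2 / S)) + ENNReal.ofReal (exp (-2 * t ^ 2 / S)) :=
          add_le_add (chern Z hint1 hmgf1) (chern (fun ω => -Z ω) hint2 hmgf2)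
      _ = ENNReal.ofReal (2 * exp (-2 * t ^ 2 / S)) := by
          rw [← ENNReal.ofReal_add (exp_nonneg _) (exp_nonneg _)]
          congr 1
          ring
end

section
/- Let c > 0 and let G = (A ∪ B, E) be a C4-free bipartite graph with every vertex of B having degree at most D. Let S ⊆ A be a 2-set and let M ⊆ N_2(S) be a set of vertices each having exactly 2 neighbors in Γ(S). Define two vertices u, v ∈ M to be in conflict if their connector sets C(u) = N(u) ∩ Γ(S) and C(v) = N(v) ∩ Γ(S) intersect. Then the conflict graph on M has maximum degree at most 2D, and hence M contains a pairwise conflict-free subset of size at least |M|/(2D). -/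
open Finset
open scoped Classical

/-- The connector set `C(v) = N(v) ∩ Γ(S)` of a vertex `v` relative to the
2-set `S = {s₁, s₂}`, where `Γ(S) = (N(s₁) ∪ N(s₂)) \ {s₁, s₂}`. -/
noncomputable def connector {V : Type*} [Fintype V] [DecidableEq V] (G : SimpleGraph V)
    (s1 s2 v : V) : Finset V :=
  G.neighborFinset v ∩ ((G.neighborFinset s1 ∪ G.neighborFinset s2) \ {s1, s2})

/-- Greedy independent set: if in `M` every vertex has at most `k - 1` neighbors
(under a symmetric relation `r`), then there is an `r`-independent subset `M'`
with `M.card ≤ k * M'.card`. -/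
lemma greedy_indep {V : Type*} [DecidableEq V] (r : V → V → Prop)
    (hsymm : ∀ u v, r u v → r v u) (k : ℕ) :
    ∀ M : Finset V,
    (∀ u ∈ M, ∃ T : Finset V, u ∉ T ∧ (∀ v ∈ M, v ≠ u → r u v → v ∈ T) ∧ T.card + 1 ≤ k) →
    ∃ M' ⊆ M, M.card ≤ k * M'.card ∧ ∀ u ∈ M', ∀ v ∈ M', u ≠ v → ¬ r u v := by
  intro M
  induction M using Finset.strongInduction with
  | _ M ih =>
    intro hdeg
    rcases M.eq_empty_or_nonempty with rfl | ⟨u, hu⟩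
    · exact ⟨∅, Finset.Subset.refl _, by simp, by simp⟩
    · obtain ⟨T, huT, hTcov, hTcard⟩ := hdeg u hu
      have hM0ss : M \ insert u T ⊂ M := by
        refine Finset.ssubset_iff_of_subset Finset.sdiff_subset |>.2 ⟨u, hu, ?_⟩
        simp
      have hM0sub : M \ insert u T ⊆ M := Finset.sdiff_subset
      obtain ⟨M'', hM''sub, hM''card, hM''ind⟩ := ih _ hM0ss (by
        intro u' hu'
        obtain ⟨T', h1, h2, h3⟩ := hdeg u' (hM0sub hu')
        exact ⟨T', h1, fun v hv => h2 v (hM0sub hv), h3⟩)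
      have huM'' : u ∉ M'' := fun h => (Finset.mem_sdiff.1 (hM''sub h)).2
        (Finset.mem_insert_self _ _)
      refine ⟨insert u M'', ?_, ?_, ?_⟩
      · intro x hx
        rcases Finset.mem_insert.1 hx with rfl | hx
        · exact hu
        · exact hM0sub (hM''sub hx)
      · calc M.card ≤ (M \ insert u T).card + (insert u T).card :=
              Finset.card_le_card_sdiff_add_card
          _ ≤ k * M''.card + (T.card + 1) := by
              rw [Finset.card_insert_of_notMem huT]
              exact Nat.add_le_add hM''card le_rfl
          _ ≤ k * M''.card + k := Nat.add_le_add_left hTcard _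
          _ = k * (insert u M'').card := by
              rw [Finset.card_insert_of_notMem huM'', Nat.mul_add, Nat.mul_one]
      · intro a ha b hb hab
        have hnr : ∀ v ∈ M'', ¬ r u v := by
          intro v hv hr
          have hvM0 := Finset.mem_sdiff.1 (hM''sub hv)
          have hvu : v ≠ u := fun h => hvM0.2 (h ▸ Finset.mem_insert_self _ _)
          exact hvM0.2 (Finset.mem_insert_of_mem (hTcov v hvM0.1 hvu hr))
        rcases Finset.mem_insert.1 ha with ha' | ha'
        · subst ha'
          rcases Finset.mem_insert.1 hb with hb' | hb'
          · exact absurd hb'.symm hab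
          · exact hnr b hb'
        · rcases Finset.mem_insert.1 hb with hb' | hb'
          · subst hb'
            exact fun hr => hnr a ha' (hsymm _ _ hr)
          · exact hM''ind a ha' b hb' hab

set_option maxHeartbeats 1000000 in
/-- Conflict graph bound: in a `C₄`-free bipartite graph with all degrees in `B`
at most `D`, given a 2-set `S = {s₁, s₂} ⊆ A` and a set `M ⊆ N₂(S)` of vertices
each having exactly 2 neighbors in `Γ(S)`, the conflict graph on `M` (where two
vertices conflict iff their connector sets intersect) has maximum degree at most
`2D`, and `M` contains a pairwise conflict-free subset of size at least `|M|/(2D)`. -/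
theorem conflict_free_subset {V : Type*} [Fintype V] [DecidableEq V]
    (G : SimpleGraph V) [DecidableRel G.Adj] (hG : C4Free G) (c : ℝ) (hc : 0 < c)
    (A B : Finset V) (hdisj : Disjoint A B) (hpart : ∀ v : V, v ∈ A ∨ v ∈ B)
    (hbip : ∀ u w : V, G.Adj u w → (u ∈ A ∧ w ∈ B) ∨ (u ∈ B ∧ w ∈ A))
    (D : ℕ) (hdeg : ∀ b ∈ B, G.degree b ≤ D)
    (s1 s2 : V) (hne : s1 ≠ s2) (hs1 : s1 ∈ A) (hs2 : s2 ∈ A)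
    (M : Finset V)
    (hM2 : ∀ v ∈ M, G.dist s1 v = 2 ∧ G.dist s2 v = 2)
    (hMC : ∀ v ∈ M, (connector G s1 s2 v).card = 2) :
    (∀ u ∈ M,
        (M.filter (fun v => v ≠ u ∧
          ¬ Disjoint (connector G s1 s2 u) (connector G s1 s2 v))).card ≤ 2 * D) ∧
    ∃ M' ⊆ M, (M.card : ℝ) / (2 * D) ≤ (M'.card : ℝ) ∧
      ∀ u ∈ M', ∀ v ∈ M', u ≠ v →
        Disjoint (connector G s1 s2 u) (connector G s1 s2 v) := by
  -- vertices in a connector set lie in B, hence have degree ≤ D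
  have hconnB : ∀ u w : V, w ∈ connector G s1 s2 u → G.degree w ≤ D := by
    intro u w hw
    simp only [connector, Finset.mem_inter, Finset.mem_sdiff, Finset.mem_union,
      SimpleGraph.mem_neighborFinset] at hw
    have hwB : w ∈ B := by
      rcases hw.2.1 with h | h
      · rcases hbip s1 w h with ⟨_, h2⟩ | ⟨h1, _⟩
        · exact h2
        · exact absurd hs1 (Finset.disjoint_right.1 hdisj h1)
      · rcases hbip s2 w h with ⟨_, h2⟩ | ⟨h1, _⟩
        · exact h2
        · exact absurd hs2 (Finset.disjoint_right.1 hdisj h1)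
    exact hdeg w hwB
  -- the key bound: insert u (conflict filter) has card ≤ 2D
  have key : ∀ u ∈ M, (insert u (M.filter (fun v => v ≠ u ∧
      ¬ Disjoint (connector G s1 s2 u) (connector G s1 s2 v)))).card ≤ 2 * D := by
    intro u hu
    have hsub : insert u (M.filter (fun v => v ≠ u ∧
        ¬ Disjoint (connector G s1 s2 u) (connector G s1 s2 v))) ⊆
        (connector G s1 s2 u).biUnion (fun w => G.neighborFinset w) := by
      intro x hx
      rcases Finset.mem_insert.1 hx with rfl | hx
      · -- u itself: take any w in its (nonempty) connector set
        have hne2 : (connector G s1 s2 x).Nonempty := by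
          rw [← Finset.card_pos, hMC x hu]; norm_num
        obtain ⟨w, hw⟩ := hne2
        refine Finset.mem_biUnion.2 ⟨w, hw, ?_⟩
        have hadj : G.Adj x w := by
          have h := (Finset.mem_inter.1 hw).1
          simpa using h
        simp only [SimpleGraph.mem_neighborFinset]
        exact hadj.symm
      · obtain ⟨_, _, hnd⟩ := Finset.mem_filter.1 hx
        obtain ⟨w, hw1, hw2⟩ := Finset.not_disjoint_iff.1 hnd
        refine Finset.mem_biUnion.2 ⟨w, hw1, ?_⟩
        have hadj : G.Adj x w := by
          have h := (Finset.mem_inter.1 hw2).1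
          simpa using h
        simp only [SimpleGraph.mem_neighborFinset]
        exact hadj.symm
    calc (insert u (M.filter _)).card
        ≤ ((connector G s1 s2 u).biUnion (fun w => G.neighborFinset w)).card :=
          Finset.card_le_card hsub
      _ ≤ ∑ w ∈ connector G s1 s2 u, (G.neighborFinset w).card :=
          Finset.card_biUnion_le
      _ ≤ ∑ w ∈ connector G s1 s2 u, D := by
          refine Finset.sum_le_sum ?_
          intro w hw
          exact hconnB u w hw
      _ = 2 * D := by rw [Finset.sum_const, hMC u hu, smul_eq_mul]
  have part1 : ∀ u ∈ M, (M.filter (fun v => v ≠ u ∧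
      ¬ Disjoint (connector G s1 s2 u) (connector G s1 s2 v))).card ≤ 2 * D := by
    intro u hu
    exact le_trans (Finset.card_le_card (Finset.subset_insert _ _)) (key u hu)
  refine ⟨part1, ?_⟩
  obtain ⟨M', hM'sub, hM'card, hM'ind⟩ := greedy_indep
    (fun u v => ¬ Disjoint (connector G s1 s2 u) (connector G s1 s2 v))
    (fun u v h => fun hd => h hd.symm) (2 * D) M (by
      intro u hu
      refine ⟨M.filter (fun v => v ≠ u ∧
          ¬ Disjoint (connector G s1 s2 u) (connector G s1 s2 v)), by simp, ?_, ?_⟩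
      · intro v hv hvu hr
        exact Finset.mem_filter.2 ⟨hv, hvu, hr⟩
      · have hnotmem : u ∉ M.filter (fun v => v ≠ u ∧
            ¬ Disjoint (connector G s1 s2 u) (connector G s1 s2 v)) := by simp
        rw [← Finset.card_insert_of_notMem hnotmem]
        exact key u hu)
  refine ⟨M', hM'sub, ?_, fun u hu v hv huv => not_not.1 (hM'ind u hu v hv huv)⟩
  rcases Nat.eq_zero_or_pos D with rfl | hD
  · simp
  · rw [div_le_iff₀ (by positivity)]
    calc (M.card : ℝ) ≤ ((2 * D * M'.card : ℕ) : ℝ) := by exact_mod_cast hM'card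
      _ = (M'.card : ℝ) * (2 * D) := by push_cast; ring
end

section
/- In a C4-free bipartite graph G with parts A and B, for any 2-set S ⊆ A, any vertex u ∈ A \ S can be adjacent to the connector sets C(v) = N(v) ∩ Γ(S) of at most 2 vertices v ∈ N_2(S) whose connector sets are pairwise disjoint and of size 2 each. -/
open Finset
open scoped Classical

/-- In a `C₄`-free bipartite graph with parts `A`, `B`, for a 2-set
`S = {s₁, s₂} ⊆ A` and vertices `v₁, …, v_k ∈ N₂(S)` with pairwise disjoint
connector sets each of size 2, any vertex `u ∈ A \ S` is adjacent to vertices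
of at most 2 of the connector sets. -/
theorem core_meets_few_connectors {V : Type*} [Fintype V] [DecidableEq V]
    (G : SimpleGraph V) [DecidableRel G.Adj] (hG : C4Free G)
    (A B : Finset V) (hdisj : Disjoint A B) (hpart : ∀ x : V, x ∈ A ∨ x ∈ B)
    (hbip : ∀ x y : V, G.Adj x y → (x ∈ A ∧ y ∈ B) ∨ (x ∈ B ∧ y ∈ A))
    (s1 s2 : V) (hne : s1 ≠ s2) (hs1 : s1 ∈ A) (hs2 : s2 ∈ A)
    (k : ℕ) (v : Fin k → V)
    (hv2 : ∀ i : Fin k, G.dist s1 (v i) = 2 ∧ G.dist s2 (v i) = 2)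
    (hC2 : ∀ i : Fin k, (connector G s1 s2 (v i)).card = 2)
    (hCdisj : ∀ i j : Fin k, i ≠ j →
      Disjoint (connector G s1 s2 (v i)) (connector G s1 s2 (v j)))
    (u : V) (hu : u ∈ A) (hu1 : u ≠ s1) (hu2 : u ≠ s2) :
    (Finset.univ.filter
      (fun i : Fin k => ∃ c ∈ connector G s1 s2 (v i), G.Adj u c)).card ≤ 2 := by
  classical
  set T := Finset.univ.filter
      (fun i : Fin k => ∃ c ∈ connector G s1 s2 (v i), G.Adj u c) with hT
  by_contra hlt
  push_neg at hlt
  -- choose witnesses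
  have hwit : ∀ i : Fin k, ∃ c, i ∈ T → c ∈ connector G s1 s2 (v i) ∧ G.Adj u c := by
    intro i
    by_cases hi : i ∈ T
    · simp only [hT, Finset.mem_filter] at hi
      obtain ⟨c, hc, hadj⟩ := hi.2
      exact ⟨c, fun _ => ⟨hc, hadj⟩⟩
    · exact ⟨u, fun h => absurd h hi⟩
  choose c hcw using hwit
  have hc : ∀ i ∈ T, c i ∈ connector G s1 s2 (v i) := fun i hi => (hcw i hi).1
  have hadj : ∀ i ∈ T, G.Adj u (c i) := fun i hi => (hcw i hi).2
  -- each witness is adjacent to s1 or s2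
  have hs : ∀ i ∈ T, G.Adj s1 (c i) ∨ G.Adj s2 (c i) := by
    intro i hi
    have := hc i hi
    simp only [connector, Finset.mem_inter, Finset.mem_sdiff, Finset.mem_union,
      SimpleGraph.mem_neighborFinset] at this
    exact this.2.1
  -- pigeonhole on Bool
  have hmaps : ∀ i ∈ T, (fun i => decide (G.Adj s1 (c i))) i ∈ (Finset.univ : Finset Bool) :=
    fun i _ => Finset.mem_univ _
  have hcard : (Finset.univ : Finset Bool).card < T.card := by
    simpa using hlt
  obtain ⟨i, hi, j, hj, hij, heq⟩ :=
    Finset.exists_ne_map_eq_of_card_lt_of_maps_to hcard hmaps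
  have hcij : c i ≠ c j := by
    intro h
    have := (hCdisj i j hij).forall_ne_finset (hc i hi) (hc j hj)
    exact this h
  cases hsi : decide (G.Adj s1 (c i)) with
  | true =>
      have h1 : G.Adj s1 (c i) := of_decide_eq_true hsi
      have h2 : G.Adj s1 (c j) := of_decide_eq_true (by rw [← heq]; exact hsi)
      have := hG u (c i) s1 (c j) (hadj i hi) h1.symm h2 ((hadj j hj).symm)
      rcases this with h | h
      · exact hu1 h
      · exact hcij h
  | false =>
      have h1 : G.Adj s2 (c i) := by
        rcases hs i hi with h | h
        · exact absurd (decide_eq_true h) (by rw [hsi]; simp)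
        · exact h
      have h2 : G.Adj s2 (c j) := by
        rcases hs j hj with h | h
        · exact absurd (decide_eq_true h) (by rw [← heq, hsi]; simp)
        · exact h
      have := hG u (c i) s2 (c j) (hadj i hi) h1.symm h2 ((hadj j hj).symm)
      rcases this with h | h
      · exact hu2 h
      · exact hcij h
end
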